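/- arXiv:2012.13070 — 4 statements merged into one kernel-verified Lean document; each statement's English description precedes it below -/
import Mathlib

section
/- Let Γ be a graph and ε an end of Γ. For any finite families R = (R_i : i ∈ I) and S = (S_j : j ∈ J) of disjoint ε-rays in Γ, there is a finite vertex set X such that every linkage from R to S after X is transitional. -/
set_option autoImplicit false

namespace Ubiquity

variable {V W T : Type}

/-- A ray (one-way infinite path) in a graph `G`. -/
structure Ray (G : SimpleGraph V) where
  f : ℕ → V
  inj : Function.Injective f
  adj : ∀ n : ℕ, G.Adj (f n) (f (n + 1))

/-- The vertex set of a ray. -/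
def Ray.verts {G : SimpleGraph V} (R : Ray G) : Set V := Set.range R.f

/-- The tail of a ray from its `k`-th vertex on. -/
def Ray.tail {G : SimpleGraph V} (R : Ray G) (k : ℕ) : Ray G where
  f := fun n => R.f (n + k)
  inj := fun a b h => by have := R.inj h; omega
  adj := fun n => by
    show G.Adj (R.f (n + k)) (R.f (n + 1 + k))
    have h : n + 1 + k = n + k + 1 := by omega
    rw [h]
    exact R.adj (n + k)

/-- `R'` is a tail of the ray `R`. -/
def Ray.IsTailOf {G : SimpleGraph V} (R' R : Ray G) : Prop :=
  ∃ k : ℕ, ∀ n : ℕ, R'.f n = R.f (n + k)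

/-- A path in `G` from a vertex of `A` to a vertex of `B`. -/
structure PathBetween (G : SimpleGraph V) (A B : Set V) where
  first : V
  last : V
  walk : G.Walk first last
  isPath : walk.IsPath
  first_mem : first ∈ A
  last_mem : last ∈ B

/-- The vertex set of such a path. -/
def PathBetween.verts {G : SimpleGraph V} {A B : Set V} (P : PathBetween G A B) : Set V :=
  {v | v ∈ P.walk.support}

/-- Two rays are equivalent in `G − X`: there are infinitely many pairwise
vertex-disjoint paths between them, all avoiding `X`. -/
def RayEquivAvoiding (G : SimpleGraph V) (X : Set V) (R S : Ray G) : Prop :=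
  ∃ P : ℕ → PathBetween G R.verts S.verts,
    (∀ n : ℕ, ∀ v ∈ (P n).verts, v ∉ X) ∧
    ∀ m n : ℕ, m ≠ n → Disjoint (P m).verts (P n).verts

/-- Two rays are equivalent: there are infinitely many pairwise vertex-disjoint
paths between them. -/
def RayEquiv (G : SimpleGraph V) (R S : Ray G) : Prop := RayEquivAvoiding G ∅ R S

/-- `ε` is an end of `G`: an equivalence class of rays. -/
def IsEnd (G : SimpleGraph V) (ε : Set (Ray G)) : Prop :=
  ε.Nonempty ∧ ∀ R ∈ ε, ∀ S : Ray G, S ∈ ε ↔ RayEquiv G R S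

/-- An end of `G − X`, viewed as an equivalence class of rays of `G` avoiding `X`. -/
def IsEndAvoiding (G : SimpleGraph V) (X : Set V) (δ : Set (Ray G)) : Prop :=
  δ.Nonempty ∧ (∀ R ∈ δ, Disjoint R.verts X) ∧
    ∀ R ∈ δ, ∀ S : Ray G, Disjoint S.verts X → (S ∈ δ ↔ RayEquivAvoiding G X R S)

/-- A family of pairwise disjoint rays, all belonging to `ε`. -/
def DisjointRayFamily {I : Type} (G : SimpleGraph V) (ε : Set (Ray G)) (R : I → Ray G) : Prop :=
  (∀ i, R i ∈ ε) ∧ ∀ i j : I, i ≠ j → Disjoint (R i).verts (R j).verts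

/-- The end `ε` has finite degree (is thin): for some `k` there is no family of
`k+1` pairwise disjoint `ε`-rays. -/
def ThinEnd (G : SimpleGraph V) (ε : Set (Ray G)) : Prop :=
  ∃ k : ℕ, ∀ R : Fin (k + 1) → Ray G, (∀ i, R i ∈ ε) →
    ¬ ∀ i j, i ≠ j → Disjoint (R i).verts (R j).verts

/-- The end `ε` is thick: it contains arbitrarily many disjoint rays. -/
def ThickEnd (G : SimpleGraph V) (ε : Set (Ray G)) : Prop :=
  ∀ n : ℕ, ∃ R : Fin n → Ray G, DisjointRayFamily G ε R

/-- `G` is locally finite. -/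
def LocFin (G : SimpleGraph V) : Prop := ∀ v : V, (G.neighborSet v).Finite

/-- An inflated copy of `G` inside `Γ`: a subgraph `H` of `Γ` with a map `φ`
whose branch sets are nonempty and connected, such that there is an edge of `H`
between the branch sets of `v` and `w` iff `vw ∈ E(G)`, this edge being unique. -/
structure InflatedCopy (G : SimpleGraph V) (Γ : SimpleGraph W) where
  H : Γ.Subgraph
  φ : W → V
  branch_nonempty : ∀ v : V, ∃ w ∈ H.verts, φ w = v
  branch_connected : ∀ v : V, (H.induce {w ∈ H.verts | φ w = v}).Connected
  adj_of_edge : ∀ ⦃a b : W⦄, H.Adj a b → φ a ≠ φ b → G.Adj (φ a) (φ b)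
  edge_of_adj : ∀ ⦃v w : V⦄, G.Adj v w → ∃ a b : W, H.Adj a b ∧ φ a = v ∧ φ b = w
  edge_unique : ∀ ⦃v w : V⦄, G.Adj v w → ∀ a b a' b' : W, H.Adj a b → H.Adj a' b' →
    φ a = v → φ b = w → φ a' = v → φ b' = w → a = a' ∧ b = b'

/-- The branch set of `v` in an inflated copy. -/
def InflatedCopy.branch {G : SimpleGraph V} {Γ : SimpleGraph W} (Hc : InflatedCopy G Γ)
    (v : V) : Set W := {w ∈ Hc.H.verts | Hc.φ w = v}

/-- A tidy inflated copy: each branch set induces a tree, finite whenever the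
corresponding vertex has finite degree. -/
def InflatedCopy.Tidy {G : SimpleGraph V} {Γ : SimpleGraph W} (Hc : InflatedCopy G Γ) : Prop :=
  ∀ v : V, (Hc.H.induce (Hc.branch v)).coe.IsTree ∧
    ((G.neighborSet v).Finite → (Hc.branch v).Finite)

/-- `G` is a minor of `Γ`. -/
def IsMinor (G : SimpleGraph V) (Γ : SimpleGraph W) : Prop := Nonempty (InflatedCopy G Γ)

/-- The disjoint union of `ι` many copies of `G`. -/
def copies (ι : Type) (G : SimpleGraph V) : SimpleGraph (ι × V) where
  Adj a b := a.1 = b.1 ∧ G.Adj a.2 b.2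
  symm := ⟨fun _ _ h => ⟨h.1.symm, h.2.symm⟩⟩
  loopless := ⟨fun a h => G.loopless.irrefl a.2 h.2⟩

/-- `a` and `b` are joined by a walk of `K` avoiding the set `X`. -/
def ReachAvoid {α : Type} (K : SimpleGraph α) (X : Set α) (a b : α) : Prop :=
  ∃ w : K.Walk a b, ∀ x ∈ w.support, x ∉ X


/-! ### Linkages and transition functions -/

/-- A linkage from the family `R` to the family `S` of disjoint rays: a family
of disjoint paths `path i` from a vertex of `R i` to a vertex of `S (σ i)` such
that the concatenated rays form a family of disjoint rays. -/
structure Linkage (Γ : SimpleGraph W) {I J : Type} (R : I → Ray Γ) (S : J → Ray Γ) where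
  σ : I → J
  inj : Function.Injective σ
  exit : I → ℕ
  entry : I → ℕ
  path : ∀ i : I, Γ.Walk ((R i).f (exit i)) ((S (σ i)).f (entry i))
  isPath : ∀ i : I, (path i).IsPath
  meet_init : ∀ i : I, ∀ v ∈ (path i).support,
    (∃ k ≤ exit i, (R i).f k = v) → v = (R i).f (exit i)
  meet_tail : ∀ i : I, ∀ v ∈ (path i).support,
    (∃ k : ℕ, entry i ≤ k ∧ (S (σ i)).f k = v) → v = (S (σ i)).f (entry i)
  init_tail : ∀ i : I, ∀ k ≤ exit i, ∀ k' : ℕ, entry i ≤ k' →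
    (R i).f k = (S (σ i)).f k' → k = exit i ∧ k' = entry i
  disj : ∀ i j : I, i ≠ j → ∀ v : W,
    ((∃ k ≤ exit i, (R i).f k = v) ∨ v ∈ (path i).support ∨
      ∃ k : ℕ, entry i ≤ k ∧ (S (σ i)).f k = v) →
    ((∃ k ≤ exit j, (R j).f k = v) ∨ v ∈ (path j).support ∨
      ∃ k : ℕ, entry j ≤ k ∧ (S (σ j)).f k = v) → False

/-- The vertex set of the `i`-th concatenated ray of a linkage. -/
def Linkage.rverts {Γ : SimpleGraph W} {I J : Type} {R : I → Ray Γ} {S : J → Ray Γ}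
    (L : Linkage Γ R S) (i : I) : Set W :=
  {v | (∃ k ≤ L.exit i, (R i).f k = v) ∨ v ∈ (L.path i).support ∨
    ∃ k : ℕ, L.entry i ≤ k ∧ (S (L.σ i)).f k = v}

/-- A linkage is after `X` if `X` meets each concatenated ray only within the
initial segment of the corresponding ray of `R`. -/
def Linkage.After {Γ : SimpleGraph W} {I J : Type} {R : I → Ray Γ} {S : J → Ray Γ}
    (L : Linkage Γ R S) (X : Set W) : Prop :=
  ∀ i : I, ∀ v ∈ X, v ∈ L.rverts i → ∃ k ≤ L.exit i, (R i).f k = v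

/-- `σ` is a transition function from `R` to `S`: for every finite vertex set `X`
there is a linkage from `R` to `S` after `X` inducing `σ`. -/
def IsTransitionFunction (Γ : SimpleGraph W) {I J : Type} (R : I → Ray Γ) (S : J → Ray Γ)
    (σ : I → J) : Prop :=
  ∀ X : Set W, X.Finite → ∃ L : Linkage Γ R S, L.σ = σ ∧ L.After X

/-- A linkage is transitional if the function it induces is a transition function. -/
def Linkage.Transitional {Γ : SimpleGraph W} {I J : Type} {R : I → Ray Γ} {S : J → Ray Γ}
    (L : Linkage Γ R S) : Prop := IsTransitionFunction Γ R S L.σ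

/-! ### Ray graphs and separation -/

/-- There are infinitely many disjoint paths from `R i` to `R j` meeting no other `R k`. -/
def LinkedRays (Γ : SimpleGraph W) {I : Type} (R : I → Ray Γ) (i j : I) : Prop :=
  ∃ P : ℕ → PathBetween Γ (R i).verts (R j).verts,
    (∀ m n : ℕ, m ≠ n → Disjoint (P m).verts (P n).verts) ∧
    ∀ n : ℕ, ∀ k : I, k ≠ i → k ≠ j → Disjoint (P n).verts (R k).verts

/-- The ray graph of a family of disjoint rays. -/
def rayGraph (Γ : SimpleGraph W) {I : Type} (R : I → Ray Γ) : SimpleGraph I where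
  Adj i j := i ≠ j ∧ (LinkedRays Γ R i j ∨ LinkedRays Γ R j i)
  symm := ⟨fun _ _ h => ⟨h.1.symm, h.2.symm⟩⟩
  loopless := ⟨fun _ h => h.1 rfl⟩

/-- `S` separates `R` from `T'`: the tails of `R` and `T'` disjoint from `S`
belong to different ends of `Γ − V(S)`. -/
def SeparatesRay (Γ : SimpleGraph W) (S R T' : Ray Γ) : Prop :=
  ∀ R' T'' : Ray Γ, R'.IsTailOf R → T''.IsTailOf T' →
    Disjoint R'.verts S.verts → Disjoint T''.verts S.verts →
    ¬ RayEquivAvoiding Γ S.verts R' T''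

/-- `K − c` has precisely two connected components, each of size at least `m`. -/
def TwoCompsAtLeast {I : Type} (K : SimpleGraph I) (c : I) (m : ℕ) : Prop :=
  ∃ A B : Set I, A.Nonempty ∧ B.Nonempty ∧ Disjoint A B ∧ A ∪ B = {i | i ≠ c} ∧
    (∀ a ∈ A, ∀ b ∈ A, ReachAvoid K {c} a b) ∧
    (∀ a ∈ B, ∀ b ∈ B, ReachAvoid K {c} a b) ∧
    (∀ a ∈ A, ∀ b ∈ B, ¬ ReachAvoid K {c} a b) ∧
    (m : ℕ∞) ≤ A.encard ∧ (m : ℕ∞) ≤ B.encard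

/-- `i` is an inner vertex of the (nodup) list `L`. -/
def IsInnerListVertex {n : ℕ} (L : List (Fin n)) (i : Fin n) : Prop :=
  i ∈ L ∧ 0 < L.idxOf i ∧ L.idxOf i + 1 < L.length

/-- The end `ε` splits in `Γ − X` into the two ends `δ` and `δ'`. -/
def SplitsInto (Γ : SimpleGraph W) (ε : Set (Ray Γ)) (X : Set W) (δ δ' : Set (Ray Γ)) : Prop :=
  IsEndAvoiding Γ X δ ∧ IsEndAvoiding Γ X δ' ∧ δ ≠ δ' ∧
    ∀ S ∈ ε, Disjoint (Ray.verts S) X → S ∈ δ ∪ δ'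

/-- `δ` is a sub-end of `δ'`: every ray of `δ` has a tail in `δ'`. -/
def SubEnd (Γ : SimpleGraph W) (δ δ' : Set (Ray Γ)) : Prop :=
  ∀ R ∈ δ, ∃ R' : Ray Γ, R'.IsTailOf R ∧ R' ∈ δ'

/-! ### Half-grid-like ends -/

/-- A witness that the thick end `ε` of `Γ` is half-grid-like: there is `N ∈ ℕ`
and a choice of (correctly oriented) central path for each family of disjoint
`ε`-rays such that: for families of size at least `N + 2` the central path is a
bare path of the ray graph containing all but at most `N` of its vertices, every
vertex whose deletion leaves precisely two components of size at least `N + 1`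
is an inner vertex of the central path, and every transition function between
families of at least `N + 3` disjoint `ε`-rays maps central path vertices to
central path vertices preserving the correct orientation. -/
structure HalfGridLike (Γ : SimpleGraph W) (ε : Set (Ray Γ)) where
  isEnd : IsEnd Γ ε
  thick : ThickEnd Γ ε
  N : ℕ
  central : ∀ {n : ℕ}, (Fin n → Ray Γ) → List (Fin n)
  central_nodup : ∀ {n : ℕ} (R : Fin n → Ray Γ), DisjointRayFamily Γ ε R → N + 2 ≤ n →
    (central R).Nodup
  central_chain : ∀ {n : ℕ} (R : Fin n → Ray Γ), DisjointRayFamily Γ ε R → N + 2 ≤ n →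
    (central R).Chain' (rayGraph Γ R).Adj
  central_large : ∀ {n : ℕ} (R : Fin n → Ray Γ), DisjointRayFamily Γ ε R → N + 2 ≤ n →
    n ≤ (central R).length + N
  central_bare : ∀ {n : ℕ} (R : Fin n → Ray Γ), DisjointRayFamily Γ ε R → N + 2 ≤ n →
    ∀ i : Fin n, IsInnerListVertex (central R) i → ((rayGraph Γ R).neighborSet i).encard = 2
  central_inner : ∀ {n : ℕ} (R : Fin n → Ray Γ), DisjointRayFamily Γ ε R → N + 2 ≤ n →
    ∀ c : Fin n, TwoCompsAtLeast (rayGraph Γ R) c (N + 1) → IsInnerListVertex (central R) c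
  central_map : ∀ {n m : ℕ} (R : Fin n → Ray Γ) (S : Fin m → Ray Γ),
    DisjointRayFamily Γ ε R → DisjointRayFamily Γ ε S → N + 3 ≤ n → N + 3 ≤ m →
    ∀ σ : Fin n → Fin m, IsTransitionFunction Γ R S σ →
    ∀ i ∈ central R, σ i ∈ central S
  central_order : ∀ {n m : ℕ} (R : Fin n → Ray Γ) (S : Fin m → Ray Γ),
    DisjointRayFamily Γ ε R → DisjointRayFamily Γ ε S → N + 3 ≤ n → N + 3 ≤ m →
    ∀ σ : Fin n → Fin m, IsTransitionFunction Γ R S σ →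
    ∀ i ∈ central R, ∀ j ∈ central R, (central R).idxOf i < (central R).idxOf j →
      (central S).idxOf (σ i) < (central S).idxOf (σ j)

/-- A core ray of the half-grid-like end `ε`. -/
def IsCoreRay {Γ : SimpleGraph W} {ε : Set (Ray Γ)} (hg : HalfGridLike Γ ε) (R : Ray Γ) : Prop :=
  R ∈ ε ∧ ∃ (n : ℕ) (F : Fin n → Ray Γ) (c : Fin n),
    DisjointRayFamily Γ ε F ∧ F c = R ∧ TwoCompsAtLeast (rayGraph Γ F) c (hg.N + 1)

/-- `(δ, δ')` is the pair of ends `(⊤(F c, F), ⊥(F c, F))` of `Γ − V(F c)`. -/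
def IsTopBotPair {Γ : SimpleGraph W} {ε : Set (Ray Γ)} (hg : HalfGridLike Γ ε)
    {n : ℕ} (F : Fin n → Ray Γ) (c : Fin n) (δ δ' : Set (Ray Γ)) : Prop :=
  IsEndAvoiding Γ (F c).verts δ ∧ IsEndAvoiding Γ (F c).verts δ' ∧ δ ≠ δ' ∧
  (∀ S ∈ ε, Disjoint (Ray.verts S) (F c).verts → S ∈ δ ∪ δ') ∧
  (∀ i : Fin n, i ∈ hg.central F →
    (hg.central F).idxOf i < (hg.central F).idxOf c → F i ∈ δ) ∧
  ∀ i : Fin n, i ∈ hg.central F →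
    (hg.central F).idxOf c < (hg.central F).idxOf i → F i ∈ δ'

/-- `R ∈ ⊤(ε, S)`: for some family witnessing `S` on a central path, `R` lies in
the top end of `Γ − V(S)`. -/
def InTop {Γ : SimpleGraph W} {ε : Set (Ray Γ)} (hg : HalfGridLike Γ ε) (S R : Ray Γ) : Prop :=
  ∃ (n : ℕ) (F : Fin n → Ray Γ) (c : Fin n) (δ δ' : Set (Ray Γ)),
    DisjointRayFamily Γ ε F ∧ hg.N + 2 ≤ n ∧ F c = S ∧ c ∈ hg.central F ∧
    IsTopBotPair hg F c δ δ' ∧ R ∈ δ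

/-- The relation `≤_ε` on core rays. -/
def coreLE {Γ : SimpleGraph W} {ε : Set (Ray Γ)} (hg : HalfGridLike Γ ε) (R S : Ray Γ) : Prop :=
  R = S ∨ ∃ a b : ℕ, Disjoint (R.tail a).verts (S.tail b).verts ∧
    InTop hg (S.tail b) (R.tail a)

/-- `R̄` (with inclusion `ι`) is an extension of the family `R` of core rays as in
Lemma 5.19: every ray of `R` disconnects the ray graph of `R̄` into exactly two
components of size at least `N + 1` and is an inner vertex of the central path,
and `|R̄| = |R| + 2N + 2`. -/
def IsBarExtension {Γ : SimpleGraph W} {ε : Set (Ray Γ)} (hg : HalfGridLike Γ ε)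
    {k : ℕ} (R : Fin k → Ray Γ) (Rbar : Fin (k + (2 * hg.N + 2)) → Ray Γ)
    (ι : Fin k ↪ Fin (k + (2 * hg.N + 2))) : Prop :=
  DisjointRayFamily Γ ε Rbar ∧ (∀ i, Rbar (ι i) = R i) ∧
  (∀ i : Fin k, TwoCompsAtLeast (rayGraph Γ Rbar) (ι i) (hg.N + 1)) ∧
  ∀ i : Fin k, IsInnerListVertex (hg.central Rbar) (ι i)

/-- A linkage is preserving on the subfamily `R` (included via `ι`): it links the
rays of `R` to core rays and preserves the order `≤_ε`. -/
def PreservingOn {Γ : SimpleGraph W} {ε : Set (Ray Γ)} (hg : HalfGridLike Γ ε)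
    {k p m : ℕ} (R : Fin k → Ray Γ) (ι : Fin k ↪ Fin p)
    {Rbar : Fin p → Ray Γ} {S : Fin m → Ray Γ} (L : Linkage Γ Rbar S) : Prop :=
  (∀ i : Fin k, IsCoreRay hg (S (L.σ (ι i)))) ∧
  ∀ i j : Fin k, coreLE hg (R i) (R j) → coreLE hg (S (L.σ (ι i))) (S (L.σ (ι j)))


/-! ### Tree-decompositions -/

/-- A tree-decomposition of `G` with decomposition tree on the vertex type `T`. -/
structure TreeDecomp (G : SimpleGraph V) (T : Type) where
  tree : SimpleGraph T
  isTree : tree.IsTree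
  part : T → Set V
  cover : ∀ v : V, ∃ t : T, v ∈ part t
  edge_cover : ∀ ⦃u v : V⦄, G.Adj u v → ∃ t : T, u ∈ part t ∧ v ∈ part t
  interpolate : ∀ ⦃t₁ t₂ t₃ : T⦄ (p : tree.Walk t₁ t₃), p.IsPath → t₂ ∈ p.support →
    part t₁ ∩ part t₃ ⊆ part t₂

/-- A rooted tree-decomposition. -/
structure RootedTreeDecomp (G : SimpleGraph V) (T : Type) extends TreeDecomp G T where
  root : T

/-- An edge of the decomposition tree, oriented away from the root: `tgt` is the
endvertex farther from the root. -/
structure RootedTreeDecomp.Edge {G : SimpleGraph V} {T : Type} (D : RootedTreeDecomp G T) where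
  src : T
  tgt : T
  adj : D.tree.Adj src tgt
  away : D.tree.dist D.root tgt = D.tree.dist D.root src + 1

/-- The vertex set of the component `T_{e⁺}` of `T − e` containing `e.tgt`. -/
def RootedTreeDecomp.above {G : SimpleGraph V} {T : Type} (D : RootedTreeDecomp G T)
    (e : D.Edge) : Set T :=
  {t | ∃ w : D.tree.Walk t e.tgt, e.src ∉ w.support}

/-- The bough `B(e)`: the union of the parts indexed by `T_{e⁺}`. -/
def RootedTreeDecomp.bough {G : SimpleGraph V} {T : Type} (D : RootedTreeDecomp G T)
    (e : D.Edge) : Set V :=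
  {v | ∃ t ∈ D.above e, v ∈ D.part t}

/-- The set `A(e)`: the union of the parts indexed outside `T_{e⁺}`. -/
def RootedTreeDecomp.sideA {G : SimpleGraph V} {T : Type} (D : RootedTreeDecomp G T)
    (e : D.Edge) : Set V :=
  {v | ∃ t : T, t ∉ D.above e ∧ v ∈ D.part t}

/-- The separator `S(e) = V_{e⁻} ∩ V_{e⁺}`. -/
def RootedTreeDecomp.sep {G : SimpleGraph V} {T : Type} (D : RootedTreeDecomp G T)
    (e : D.Edge) : Set V :=
  D.part e.src ∩ D.part e.tgt

/-- The graph `Ḡ[B(e)]`: the induced graph on `B(e)` with all edges between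
vertices of `S(e)` deleted. -/
def RootedTreeDecomp.barB {G : SimpleGraph V} {T : Type} (D : RootedTreeDecomp G T)
    (e : D.Edge) : SimpleGraph (D.bough e) where
  Adj a b := G.Adj ↑a ↑b ∧ ¬((↑a : V) ∈ D.sep e ∧ (↑b : V) ∈ D.sep e)
  symm := ⟨fun _ _ h => ⟨h.1.symm, fun hc => h.2 ⟨hc.2, hc.1⟩⟩⟩
  loopless := ⟨fun a h => G.loopless.irrefl ↑a h.1⟩

/-- A witness for the self-similarity of the bough `B(e)` along the family of
rays `Rfam`, of distance at least `n`: an edge `e'` of `T_{e⁺}` at distance at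
least `n`, together with an inflated copy `Wcopy` of `Ḡ[B(e)]` inside `G[B(e')]`
such that each ray `Rfam s` (for `s ∈ S(e)`) meets `S(e')` only inside the
branch set of `s`. -/
structure SelfSimilarityWitness {G : SimpleGraph V} {T : Type} (D : RootedTreeDecomp G T)
    (e : D.Edge) (Rfam : V → Ray G) (n : ℕ) where
  e' : D.Edge
  habove : e'.src ∈ D.above e
  hfar : n ≤ D.tree.dist e.src e'.src
  Wcopy : InflatedCopy (D.barB e) G
  hsub : Wcopy.H.verts ⊆ D.bough e'
  hmeets : ∀ s ∈ D.sep e, ∃ k : ℕ, (Rfam s).f k ∈ D.sep e'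
  hbranch : ∀ s ∈ D.sep e, ∀ k : ℕ, (Rfam s).f k ∈ D.sep e' →
    (Rfam s).f k ∈ Wcopy.H.verts ∧ (↑(Wcopy.φ ((Rfam s).f k)) : V) = s

/-- The bough `B(e)` is self-similar towards the end `ω` of `G`. -/
def BoughSelfSimilar {G : SimpleGraph V} {T : Type} (D : RootedTreeDecomp G T) (e : D.Edge)
    (ω : Set (Ray G)) : Prop :=
  ∃ Rfam : V → Ray G,
    (∀ s ∈ D.sep e, (Rfam s).f 0 = s ∧ Rfam s ∈ ω) ∧
    (∀ s ∈ D.sep e, ∀ s' ∈ D.sep e, s ≠ s' → Disjoint (Rfam s).verts (Rfam s').verts) ∧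
    ∀ n : ℕ, Nonempty (SelfSimilarityWitness D e Rfam n)

/-- An extensive tree-decomposition: the tree is locally finite, every part is
finite, every vertex lies in finitely many parts, and every bough is
self-similar towards some end of `G`. -/
def Extensive {G : SimpleGraph V} {T : Type} (D : RootedTreeDecomp G T) : Prop :=
  (∀ t : T, (D.tree.neighborSet t).Finite) ∧
  (∀ t : T, (D.part t).Finite) ∧
  (∀ v : V, {t : T | v ∈ D.part t}.Finite) ∧
  ∀ e : D.Edge, ∃ ω : Set (Ray G), IsEnd G ω ∧ BoughSelfSimilar D e ω

/-- A lean tree-decomposition. -/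
def LeanTD {G : SimpleGraph V} {T : Type} (D : RootedTreeDecomp G T) : Prop :=
  ∀ (k : ℕ) (t₁ t₂ : T) (X₁ X₂ : Set V), X₁ ⊆ D.part t₁ → X₂ ⊆ D.part t₂ →
    (k : ℕ∞) ≤ X₁.encard → (k : ℕ∞) ≤ X₂.encard →
    (∃ P : Fin k → PathBetween G X₁ X₂, ∀ i j, i ≠ j → Disjoint (P i).verts (P j).verts) ∨
    ∃ t : T, (∀ p : D.tree.Walk t₁ t₂, p.IsPath → t ∈ p.support) ∧ (D.part t).encard < (k : ℕ∞)

/-- The ray `0 – 1 – 2 – ⋯` as a graph on `ℕ`. -/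
def pathGraphN : SimpleGraph ℕ where
  Adj a b := a + 1 = b ∨ b + 1 = a
  symm := ⟨fun _ _ h => h.symm⟩
  loopless := ⟨fun a h => by rcases h with h | h <;> omega⟩

/-! ### Pullbacks and end components -/

/-- `S` is a pullback of the ray `R` of `G` to the inflated copy `Hc`: `S`
traverses the branch sets of the vertices of `R` consecutively and in order. -/
def IsPullbackRay {G : SimpleGraph V} {Γ : SimpleGraph W} (Hc : InflatedCopy G Γ)
    (R : Ray G) (S : Ray Γ) : Prop :=
  ∃ g : ℕ → ℕ, Monotone g ∧ g 0 = 0 ∧ (∀ m : ℕ, ∃ k, m ≤ g k) ∧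
    (∀ k, g (k + 1) ≤ g k + 1) ∧
    ∀ k, S.f k ∈ Hc.H.verts ∧ Hc.φ (S.f k) = R.f (g k)

/-- The component `C(X, δ)` of `Γ − X` in which every ray of `δ` has a tail. -/
def endComp (Γ : SimpleGraph W) (X : Set W) (δ : Set (Ray Γ)) : Set W :=
  {w | ∃ R ∈ δ, ∃ k : ℕ, (∀ j : ℕ, k ≤ j → R.f j ∉ X) ∧ ReachAvoid Γ X w (R.f k)}


/-- For finite families of disjoint `ε`-rays `R`, `S` there is a finite
vertex set `X` such that every linkage from `R` to `S` after `X` is transitional. -/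
theorem exists_finite_set_linkage_after_transitional
    (Γ : SimpleGraph W) (ε : Set (Ray Γ)) (hε : IsEnd Γ ε)
    {n m : ℕ} (R : Fin n → Ray Γ) (S : Fin m → Ray Γ)
    (hR : DisjointRayFamily Γ ε R) (hS : DisjointRayFamily Γ ε S) :
    ∃ X : Set W, X.Finite ∧ ∀ L : Linkage Γ R S, L.After X → L.Transitional := by
  -- For each σ that is not a transition function, choose a finite witness set.
  have key : ∀ σ : Fin n → Fin m, ∃ X : Set W, X.Finite ∧
      (¬ IsTransitionFunction Γ R S σ →
        ¬ ∃ L : Linkage Γ R S, L.σ = σ ∧ L.After X) := by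
    intro σ
    by_cases h : IsTransitionFunction Γ R S σ
    · exact ⟨∅, Set.finite_empty, fun hc => absurd h hc⟩
    · simp only [IsTransitionFunction, not_forall] at h
      obtain ⟨X, hXfin, hX⟩ := h
      exact ⟨X, hXfin, fun _ => hX⟩
  choose f hfin hbad using key
  refine ⟨⋃ σ : Fin n → Fin m, f σ, Set.finite_iUnion hfin, ?_⟩
  intro L hL
  by_contra htrans
  apply hbad L.σ htrans
  refine ⟨L, rfl, ?_⟩
  intro i v hv hmem
  exact hL i v (Set.mem_iUnion.mpr ⟨L.σ, hv⟩) hmem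

end Ubiquity
end

section
/- Let Γ be a graph, ε an end of Γ, X ⊆ V(Γ) a finite set, and let R = (R_i : i ∈ I) and S = (S_j : j ∈ J) be finite families of disjoint ε-rays with |I| ≤ |J|. Then there is a finite subgraph Y of Γ (a transition box between R and S after X) such that for every transition function σ from R to S there is a linkage P_σ from R to S inducing σ, all of whose paths lie in Y, which is after X. -/
set_option autoImplicit false

namespace Ubiquity

variable {V W T : Type}

/-- Transition boxes exist: a finite subgraph `Y` such that every
transition function from `R` to `S` is induced by a linkage after `X` all of
whose paths lie in `Y`. -/
theorem transition_box_exists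
    (Γ : SimpleGraph W) (ε : Set (Ray Γ)) (hε : IsEnd Γ ε)
    (X : Set W) (hX : X.Finite)
    {n m : ℕ} (hnm : n ≤ m) (R : Fin n → Ray Γ) (S : Fin m → Ray Γ)
    (hR : DisjointRayFamily Γ ε R) (hS : DisjointRayFamily Γ ε S) :
    ∃ Y : Γ.Subgraph, Y.verts.Finite ∧
      ∀ σ : Fin n → Fin m, IsTransitionFunction Γ R S σ →
        ∃ L : Linkage Γ R S, L.σ = σ ∧ L.After X ∧
          ∀ i : Fin n, (∀ v ∈ (L.path i).support, v ∈ Y.verts) ∧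
            ∀ ed ∈ (L.path i).edges, ed ∈ Y.edgeSet := by
  classical
  let Ysub : (Fin n → Fin m) → Γ.Subgraph := fun σ =>
    if h : IsTransitionFunction Γ R S σ then
      ⨆ i : Fin n, ((h X hX).choose.path i).toSubgraph
    else ⊥
  refine ⟨⨆ σ, Ysub σ, ?_, ?_⟩
  · rw [SimpleGraph.Subgraph.verts_iSup]
    refine Set.finite_iUnion fun σ => ?_
    show (Ysub σ).verts.Finite
    simp only [Ysub]
    split
    · rw [SimpleGraph.Subgraph.verts_iSup]
      refine Set.finite_iUnion fun i => ?_
      rw [SimpleGraph.Walk.verts_toSubgraph]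
      exact List.finite_toSet _
    · simp
  · intro σ hσ
    obtain ⟨h1, h2⟩ := (hσ X hX).choose_spec
    refine ⟨(hσ X hX).choose, h1, h2, fun i => ?_⟩
    have hle : ((hσ X hX).choose.path i).toSubgraph ≤ ⨆ σ, Ysub σ := by
      refine le_trans ?_ (le_iSup Ysub σ)
      show _ ≤ Ysub σ
      simp only [Ysub]
      rw [dif_pos hσ]
      exact le_iSup (fun i => ((hσ X hX).choose.path i).toSubgraph) i
    constructor
    · intro v hv
      exact hle.1 (((hσ X hX).choose.path i).mem_verts_toSubgraph.mpr hv)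
    · intro ed hed
      have : ed ∈ ((hσ X hX).choose.path i).toSubgraph.edgeSet := by
        rw [SimpleGraph.Walk.edgeSet_toSubgraph]; exact hed
      exact SimpleGraph.Subgraph.edgeSet_mono hle this

end Ubiquity
end

section
/- Let G be a locally finite connected graph with an extensive tree-decomposition (T, (V_t)). For each edge e of T, each n ∈ ℕ, and each witness W of the self-similarity of the bough B(e) of distance at least n, the graph G[A(e)] ⊕_{R_e} W is well-defined and is a push-out of G along e to depth n. In particular, G has a push-out along e to depth n for every n ∈ ℕ. -/
set_option autoImplicit false

namespace Ubiquity

variable {V W T : Type}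

/-! ### Auxiliary lemmas for Statement 5 -/

section TreeAux
open scoped Classical

variable {Γ : SimpleGraph T}

lemma aux_path_eq (hT : Γ.IsAcyclic) {a b : T} (p q : Γ.Walk a b)
    (hp : p.IsPath) (hq : q.IsPath) : p = q := by
  have := hT.path_unique ⟨p, hp⟩ ⟨q, hq⟩
  exact congrArg Subtype.val this


lemma aux_isPath_concat {a b c : T} {p : Γ.Walk a b} (hp : p.IsPath) (h : Γ.Adj b c)
    (hc : c ∉ p.support) : (p.concat h).IsPath := by
  rw [← SimpleGraph.Walk.isPath_reverse_iff, SimpleGraph.Walk.reverse_concat]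
  exact (hp.reverse).cons (by rwa [SimpleGraph.Walk.support_reverse, List.mem_reverse])

lemma aux_path_length (hT : Γ.IsTree) {a b : T} (p : Γ.Walk a b) (hp : p.IsPath) :
    p.length = Γ.dist a b := by
  obtain ⟨q, hq⟩ := hT.isConnected.exists_walk_length_eq_dist a b
  have h1 : p = (q.toPath : Γ.Walk a b) := aux_path_eq hT.IsAcyclic p _ hp q.toPath.2
  have h2 : (q.toPath : Γ.Walk a b).length ≤ q.length := SimpleGraph.Walk.length_bypass_le q
  have h3 := SimpleGraph.dist_le p
  have h5 := congrArg SimpleGraph.Walk.length h1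
  omega

lemma aux_dist_split (hT : Γ.IsTree) {a b x : T} (p : Γ.Walk a b) (hp : p.IsPath)
    (hx : x ∈ p.support) : Γ.dist a b = Γ.dist a x + Γ.dist x b := by
  classical
  have h1 := aux_path_length hT _ (hp.takeUntil hx)
  have h2 := aux_path_length hT _ (hp.dropUntil hx)
  have h3 := aux_path_length hT p hp
  have h4 := congrArg SimpleGraph.Walk.length (p.take_spec hx)
  rw [SimpleGraph.Walk.length_append] at h4
  omega

end TreeAux

section DecompAux
open scoped Classical

variable {G : SimpleGraph V} {D : RootedTreeDecomp G T}

lemma aux_tgt_mem_above (ed : D.Edge) : ed.tgt ∈ D.above ed := by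
  refine ⟨SimpleGraph.Walk.nil, ?_⟩
  simp only [SimpleGraph.Walk.support_nil, List.mem_singleton]
  exact ed.adj.ne

lemma aux_src_not_mem_above (ed : D.Edge) : ed.src ∉ D.above ed := by
  rintro ⟨w, hw⟩
  exact hw w.start_mem_support

lemma aux_pathA (ed : D.Edge) {t : T} (ht : t ∈ D.above ed)
    (r : D.tree.Walk t ed.src) (hr : r.IsPath) : ed.tgt ∈ r.support := by
  obtain ⟨w, hw⟩ := ht
  have hwp : ed.src ∉ (w.toPath : D.tree.Walk t ed.tgt).support :=
    fun h => hw (SimpleGraph.Walk.support_toPath_subset w h)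
  have hconc : ((w.toPath : D.tree.Walk t ed.tgt).concat ed.adj.symm).IsPath :=
    aux_isPath_concat w.toPath.2 ed.adj.symm hwp
  have heq : r = (w.toPath : D.tree.Walk t ed.tgt).concat ed.adj.symm :=
    aux_path_eq D.isTree.IsAcyclic r _ hr hconc
  rw [heq, SimpleGraph.Walk.support_concat, List.mem_append]
  exact Or.inl (SimpleGraph.Walk.end_mem_support _)

lemma aux_supportLemma (ed : D.Edge) {t t' : T} (ht : t ∉ D.above ed)
    (ht' : t' ∈ D.above ed) (p : D.tree.Walk t t') (hp : p.IsPath) :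
    ed.src ∈ p.support ∧ ed.tgt ∈ p.support := by
  classical
  obtain ⟨w, hw⟩ := ht'
  have hsrc : ed.src ∈ p.support := by
    by_contra hc
    exact ht ⟨p.append w, by
      rw [SimpleGraph.Walk.mem_support_append_iff]
      rintro (h | h)
      exacts [hc h, hw h]⟩
  refine ⟨hsrc, ?_⟩
  have hdrop := hp.dropUntil hsrc
  have hmem := aux_pathA ed ⟨w, hw⟩ (p.dropUntil ed.src hsrc).reverse hdrop.reverse
  rw [SimpleGraph.Walk.support_reverse, List.mem_reverse] at hmem
  exact SimpleGraph.Walk.support_dropUntil_subset p hsrc hmem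

lemma aux_sep_lemma (ed : D.Edge) {t t' : T} (ht : t ∉ D.above ed)
    (ht' : t' ∈ D.above ed) : D.part t ∩ D.part t' ⊆ D.sep ed := by
  obtain ⟨w⟩ := D.isTree.isConnected t t'
  obtain ⟨hsrc, htgt⟩ := aux_supportLemma ed ht ht' (w.toPath : D.tree.Walk t t') w.toPath.2
  intro v hv
  exact ⟨D.interpolate _ w.toPath.2 hsrc hv, D.interpolate _ w.toPath.2 htgt hv⟩

lemma aux_root_not_above (ed : D.Edge) : D.root ∉ D.above ed := by
  intro h
  obtain ⟨w, hw⟩ := h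
  have hwp : ed.src ∉ (w.toPath : D.tree.Walk D.root ed.tgt).support :=
    fun hx => hw (SimpleGraph.Walk.support_toPath_subset w hx)
  have hconc : ((w.toPath : D.tree.Walk D.root ed.tgt).concat ed.adj.symm).IsPath :=
    aux_isPath_concat w.toPath.2 ed.adj.symm hwp
  have h1 := aux_path_length D.isTree _ hconc
  have h2 := aux_path_length D.isTree (w.toPath : D.tree.Walk D.root ed.tgt) w.toPath.2
  rw [SimpleGraph.Walk.length_concat] at h1
  have h3 := ed.away
  omega

lemma aux_dist_above (ed : D.Edge) {y : T} (hy : y ∈ D.above ed) :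
    D.tree.dist D.root y = D.tree.dist D.root ed.src + D.tree.dist ed.src y := by
  obtain ⟨w⟩ := D.isTree.isConnected D.root y
  obtain ⟨hsrc, -⟩ := aux_supportLemma ed (aux_root_not_above ed) hy
    (w.toPath : D.tree.Walk D.root y) w.toPath.2
  exact aux_dist_split D.isTree _ w.toPath.2 hsrc

lemma aux_above_asymm {ed ed' : D.Edge} (h1 : ed.src ∈ D.above ed')
    (h2 : ed'.src ∈ D.above ed) : False := by
  have d1 := aux_dist_above ed' h1
  have d2 := aux_dist_above ed h2
  have hc : D.tree.dist ed'.src ed.src = D.tree.dist ed.src ed'.src :=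
    SimpleGraph.dist_comm
  have hz : D.tree.dist ed.src ed'.src = 0 := by omega
  have heq := (D.isTree.isConnected.dist_eq_zero_iff).mp hz
  rw [heq] at h1
  exact aux_src_not_mem_above ed' h1

lemma aux_tgt_above_of_src {ed ed' : D.Edge} (h : ed'.src ∈ D.above ed) :
    ed'.tgt ∈ D.above ed := by
  by_contra h2
  have hpath : (SimpleGraph.Walk.cons ed'.adj.symm SimpleGraph.Walk.nil :
      D.tree.Walk ed'.tgt ed'.src).IsPath := by
    simp [ed'.adj.ne']
  obtain ⟨hsrc, htgt⟩ := aux_supportLemma ed h2 h _ hpath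
  simp only [SimpleGraph.Walk.support_cons, SimpleGraph.Walk.support_nil,
    List.mem_cons, List.mem_singleton, List.not_mem_nil, or_false] at hsrc htgt
  rcases hsrc with hsrc | hsrc
  · rcases htgt with htgt | htgt
    · exact ed.adj.ne (hsrc.trans htgt.symm)
    · have h3 := ed.away
      have h4 := ed'.away
      rw [← hsrc, ← htgt] at h4
      omega
  · rw [← hsrc] at h
    exact aux_src_not_mem_above ed h

lemma aux_above_mono {ed ed' : D.Edge} (h : ed'.src ∈ D.above ed) :
    D.above ed' ⊆ D.above ed := by
  classical
  intro t ht'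
  obtain ⟨w, hw⟩ := ht'
  have hp' : ed'.src ∉ (w.toPath : D.tree.Walk t ed'.tgt).support :=
    fun hx => hw (SimpleGraph.Walk.support_toPath_subset w hx)
  obtain ⟨q, hq⟩ := aux_tgt_above_of_src h
  by_cases hc : ed.src ∈ (w.toPath : D.tree.Walk t ed'.tgt).support
  · exfalso
    have hsub : ed'.src ∉ ((w.toPath : D.tree.Walk t ed'.tgt).dropUntil ed.src hc).support :=
      fun hx => hp' (SimpleGraph.Walk.support_dropUntil_subset _ hc hx)
    exact aux_above_asymm ⟨_, hsub⟩ h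
  · refine ⟨(w.toPath : D.tree.Walk t ed'.tgt).append q, ?_⟩
    rw [SimpleGraph.Walk.mem_support_append_iff]
    rintro (hx | hx)
    exacts [hc hx, hq hx]

lemma aux_sep_subset_bough (ed : D.Edge) : D.sep ed ⊆ D.bough ed :=
  fun _ hv => ⟨ed.tgt, aux_tgt_mem_above ed, hv.2⟩

lemma aux_sep_subset_sideA (ed : D.Edge) : D.sep ed ⊆ D.sideA ed :=
  fun _ hv => ⟨ed.src, aux_src_not_mem_above ed, hv.1⟩

lemma aux_sideA_of_not_bough (ed : D.Edge) {v : V} (hv : v ∉ D.bough ed) :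
    v ∈ D.sideA ed := by
  obtain ⟨t, ht⟩ := D.cover v
  by_cases h : t ∈ D.above ed
  · exact absurd ⟨t, h, ht⟩ hv
  · exact ⟨t, h, ht⟩

lemma aux_sideA_inter_bough (ed : D.Edge) {v : V} (h1 : v ∈ D.sideA ed)
    (h2 : v ∈ D.bough ed) : v ∈ D.sep ed := by
  obtain ⟨t, ht, hv⟩ := h1
  obtain ⟨t', ht', hv'⟩ := h2
  exact aux_sep_lemma ed ht ht' ⟨hv, hv'⟩

lemma aux_edge_into_bough (ed : D.Edge) {u v : V} (h : G.Adj u v)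
    (hu : u ∉ D.bough ed) (hv : v ∈ D.bough ed) : v ∈ D.sep ed := by
  obtain ⟨t, h1, h2⟩ := D.edge_cover h
  have ht : t ∉ D.above ed := fun hh => hu ⟨t, hh, h1⟩
  obtain ⟨t', ht', hv'⟩ := hv
  exact aux_sep_lemma ed ht ht' ⟨h2, hv'⟩

lemma aux_bough_mono {ed ed' : D.Edge} (h : ed'.src ∈ D.above ed) :
    D.bough ed' ⊆ D.bough ed := by
  rintro v ⟨t, ht, hv⟩
  exact ⟨t, aux_above_mono h ht, hv⟩

lemma aux_sideA_inter_bough' {ed ed' : D.Edge} (h : ed'.src ∈ D.above ed) {v : V}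
    (h1 : v ∈ D.sideA ed) (h2 : v ∈ D.bough ed') : v ∈ D.sep ed' := by
  obtain ⟨t, ht, hv⟩ := h1
  obtain ⟨t', ht', hv'⟩ := h2
  exact aux_sep_lemma ed' (fun hx => ht (aux_above_mono h hx)) ht' ⟨hv, hv'⟩

end DecompAux

section PushOut
open scoped Classical

variable {G : SimpleGraph V} {D : RootedTreeDecomp G T} {e : D.Edge}
  {Rfam : V → Ray G} {n : ℕ}

/-- The first index at which the ray `Rfam s` meets the witness copy. -/
noncomputable def pK (Wit : SelfSimilarityWitness D e Rfam n) (s : V) : ℕ :=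
  if h : ∃ k, (Rfam s).f k ∈ Wit.Wcopy.H.verts then Nat.find h else 0

/-- The initial segment of the ray `Rfam s` up to index `pK`. -/
def pSeg (Wit : SelfSimilarityWitness D e Rfam n) (s : V) : Set V :=
  {w | ∃ k ≤ pK Wit s, (Rfam s).f k = w}

/-- The branch map of the amalgam. -/
noncomputable def pPhi (Wit : SelfSimilarityWitness D e Rfam n) (w : V) : V :=
  if w ∈ Wit.Wcopy.H.verts then ↑(Wit.Wcopy.φ w)
  else if h : ∃ s, s ∈ D.sep e ∧ w ∈ pSeg Wit s then h.choose else w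

/-- The vertex set of the amalgam. -/
def pVerts (Wit : SelfSimilarityWitness D e Rfam n) : Set V :=
  {w | w ∈ D.sideA e ∨ w ∈ Wit.Wcopy.H.verts ∨ ∃ s ∈ D.sep e, w ∈ pSeg Wit s}

/-- Edges along the connecting ray segments. -/
def pRayE (Wit : SelfSimilarityWitness D e Rfam n) (a b : V) : Prop :=
  ∃ s ∈ D.sep e, ∃ k < pK Wit s,
    ((Rfam s).f k = a ∧ (Rfam s).f (k + 1) = b) ∨
    ((Rfam s).f k = b ∧ (Rfam s).f (k + 1) = a)

/-- The amalgam subgraph `G[A(e)] ⊕ W`. -/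
def pH (Wit : SelfSimilarityWitness D e Rfam n) : G.Subgraph where
  verts := pVerts Wit
  Adj a b := G.Adj a b ∧ a ∈ pVerts Wit ∧ b ∈ pVerts Wit ∧
    ((a ∈ D.sideA e ∧ b ∈ D.sideA e) ∨ Wit.Wcopy.H.Adj a b ∨ pRayE Wit a b)
  adj_sub h := h.1
  edge_vert h := h.2.1
  symm := by
    constructor
    rintro a b ⟨h1, h2, h3, h4⟩
    refine ⟨h1.symm, h3, h2, ?_⟩
    rcases h4 with h | h | ⟨s, hs, k, hk, h⟩
    · exact Or.inl ⟨h.2, h.1⟩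
    · exact Or.inr (Or.inl h.symm)
    · exact Or.inr (Or.inr ⟨s, hs, k, hk, h.symm⟩)

variable {Wit : SelfSimilarityWitness D e Rfam n}

lemma L_ex (Wit : SelfSimilarityWitness D e Rfam n) {s : V} (hs : s ∈ D.sep e) :
    ∃ k, (Rfam s).f k ∈ Wit.Wcopy.H.verts := by
  obtain ⟨k, hk⟩ := Wit.hmeets s hs
  exact ⟨k, (Wit.hbranch s hs k hk).1⟩

lemma L_Kspec (Wit : SelfSimilarityWitness D e Rfam n) {s : V} (hs : s ∈ D.sep e) :
    (Rfam s).f (pK Wit s) ∈ Wit.Wcopy.H.verts := by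
  have hx := L_ex Wit hs
  simp only [pK, dif_pos hx]
  exact Nat.find_spec hx

lemma L_Kmin (Wit : SelfSimilarityWitness D e Rfam n) {s : V} (hs : s ∈ D.sep e)
    {k : ℕ} (hk : k < pK Wit s) : (Rfam s).f k ∉ Wit.Wcopy.H.verts := by
  have hx := L_ex Wit hs
  simp only [pK, dif_pos hx] at hk
  exact Nat.find_min hx hk

lemma L_self_seg (hst : ∀ s ∈ D.sep e, (Rfam s).f 0 = s) {s : V} (hs : s ∈ D.sep e) :
    s ∈ pSeg Wit s :=
  ⟨0, Nat.zero_le _, hst s hs⟩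

lemma L_seg_disj (hdj : ∀ s ∈ D.sep e, ∀ s' ∈ D.sep e, s ≠ s' →
      Disjoint (Rfam s).verts (Rfam s').verts)
    {s s' w : V} (hs : s ∈ D.sep e) (hs' : s' ∈ D.sep e) (hne : s ≠ s')
    (h1 : w ∈ pSeg Wit s) (h2 : w ∈ pSeg Wit s') : False := by
  obtain ⟨k, -, hk⟩ := h1
  obtain ⟨k', -, hk'⟩ := h2
  exact Set.disjoint_left.mp (hdj s hs s' hs' hne) ⟨k, hk⟩ ⟨k', hk'⟩

lemma L_not_sep (hst : ∀ s ∈ D.sep e, (Rfam s).f 0 = s)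
    (hdj : ∀ s ∈ D.sep e, ∀ s' ∈ D.sep e, s ≠ s' →
      Disjoint (Rfam s).verts (Rfam s').verts)
    {s : V} (hs : s ∈ D.sep e) {k : ℕ} (hk : 0 < k) : (Rfam s).f k ∉ D.sep e := by
  intro hmem
  by_cases hxs : (Rfam s).f k = s
  · have h0 : (Rfam s).f k = (Rfam s).f 0 := by rw [hxs, hst s hs]
    have := (Rfam s).inj h0
    omega
  · exact Set.disjoint_left.mp (hdj s hs _ hmem (Ne.symm hxs)) ⟨k, rfl⟩ ⟨0, hst _ hmem⟩

lemma L_K_sep (hst : ∀ s ∈ D.sep e, (Rfam s).f 0 = s)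
    (Wit : SelfSimilarityWitness D e Rfam n) {s : V} (hs : s ∈ D.sep e) :
    (Rfam s).f (pK Wit s) ∈ D.sep Wit.e' ∧
      (↑(Wit.Wcopy.φ ((Rfam s).f (pK Wit s))) : V) = s := by
  have hJex : ∃ j, (Rfam s).f j ∈ D.bough Wit.e' := ⟨pK Wit s, Wit.hsub (L_Kspec Wit hs)⟩
  have hJ : (Rfam s).f (Nat.find hJex) ∈ D.bough Wit.e' := Nat.find_spec hJex
  have hJsep : (Rfam s).f (Nat.find hJex) ∈ D.sep Wit.e' := by
    rcases hJn : Nat.find hJex with _ | m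
    · rw [hJn] at hJ
      have hs0 : (Rfam s).f 0 = s := hst s hs
      rw [hs0] at hJ ⊢
      exact aux_sideA_inter_bough' Wit.habove (aux_sep_subset_sideA e hs) hJ
    · rw [hJn] at hJ
      have hm : (Rfam s).f m ∉ D.bough Wit.e' := Nat.find_min hJex (by omega)
      exact aux_edge_into_bough Wit.e' ((Rfam s).adj m) hm hJ
  have hKJ := Wit.hbranch s hs (Nat.find hJex) hJsep
  have h1 : pK Wit s ≤ Nat.find hJex := by
    have hx := L_ex Wit hs
    simp only [pK, dif_pos hx]
    exact Nat.find_min' hx hKJ.1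
  have h2 : Nat.find hJex ≤ pK Wit s := Nat.find_min' hJex (Wit.hsub (L_Kspec Wit hs))
  have heq : Nat.find hJex = pK Wit s := le_antisymm h2 h1
  rw [heq] at hJsep hKJ
  exact ⟨hJsep, hKJ.2⟩

lemma L_seg_bough (hst : ∀ s ∈ D.sep e, (Rfam s).f 0 = s)
    (hdj : ∀ s ∈ D.sep e, ∀ s' ∈ D.sep e, s ≠ s' →
      Disjoint (Rfam s).verts (Rfam s').verts)
    {s : V} (hs : s ∈ D.sep e) {k : ℕ} (hk : k ≤ pK Wit s) :
    (Rfam s).f k ∈ D.bough e := by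
  have base : (Rfam s).f (pK Wit s) ∈ D.bough e :=
    aux_bough_mono Wit.habove (Wit.hsub (L_Kspec Wit hs))
  have main : ∀ d k, k + d = pK Wit s → (Rfam s).f k ∈ D.bough e := by
    intro d
    induction d with
    | zero =>
      intro k hk0
      have : k = pK Wit s := by omega
      rw [this]; exact base
    | succ d ih =>
      intro k hk0
      have h1 := ih (k + 1) (by omega)
      by_contra hk1
      exact L_not_sep hst hdj hs (Nat.succ_pos k)
        (aux_edge_into_bough e ((Rfam s).adj k) hk1 h1)
  exact main (pK Wit s - k) k (by omega)

lemma L_phiW {w : V} (hw : w ∈ Wit.Wcopy.H.verts) :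
    pPhi Wit w = ↑(Wit.Wcopy.φ w) := by
  simp only [pPhi, if_pos hw]

lemma L_phi_seg (hst : ∀ s ∈ D.sep e, (Rfam s).f 0 = s)
    (hdj : ∀ s ∈ D.sep e, ∀ s' ∈ D.sep e, s ≠ s' →
      Disjoint (Rfam s).verts (Rfam s').verts)
    {s w : V} (hs : s ∈ D.sep e) (hw : w ∈ pSeg Wit s) : pPhi Wit w = s := by
  by_cases hwW : w ∈ Wit.Wcopy.H.verts
  · rw [L_phiW hwW]
    obtain ⟨k, hk, hkw⟩ := hw
    rcases lt_or_eq_of_le hk with hlt | heq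
    · exact absurd (hkw ▸ hwW) (L_Kmin Wit hs hlt)
    · rw [← hkw, heq]
      exact (L_K_sep hst Wit hs).2
  · have h0 : ∃ s', s' ∈ D.sep e ∧ w ∈ pSeg Wit s' := ⟨s, hs, hw⟩
    simp only [pPhi, if_neg hwW, dif_pos h0]
    obtain ⟨hc1, hc2⟩ := h0.choose_spec
    by_contra hne
    exact L_seg_disj hdj hc1 hs hne hc2 hw

lemma L_phi_id {w : V} (h1 : w ∉ Wit.Wcopy.H.verts)
    (h2 : ¬∃ s, s ∈ D.sep e ∧ w ∈ pSeg Wit s) : pPhi Wit w = w := by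
  simp only [pPhi, if_neg h1, dif_neg h2]

lemma L_phi_out (hst : ∀ s ∈ D.sep e, (Rfam s).f 0 = s)
    (hdj : ∀ s ∈ D.sep e, ∀ s' ∈ D.sep e, s ≠ s' →
      Disjoint (Rfam s).verts (Rfam s').verts)
    {v : V} (hv : v ∉ D.bough e) : pPhi Wit v = v := by
  apply L_phi_id
  · exact fun h => hv (aux_bough_mono Wit.habove (Wit.hsub h))
  · rintro ⟨s, hs, k, hk, hkv⟩
    exact hv (hkv ▸ L_seg_bough hst hdj hs hk)

lemma L_phi_sep (hst : ∀ s ∈ D.sep e, (Rfam s).f 0 = s)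
    (hdj : ∀ s ∈ D.sep e, ∀ s' ∈ D.sep e, s ≠ s' →
      Disjoint (Rfam s).verts (Rfam s').verts)
    {s : V} (hs : s ∈ D.sep e) : pPhi Wit s = s :=
  L_phi_seg hst hdj hs (L_self_seg hst hs)

lemma L_phi_sideA (hst : ∀ s ∈ D.sep e, (Rfam s).f 0 = s)
    (hdj : ∀ s ∈ D.sep e, ∀ s' ∈ D.sep e, s ≠ s' →
      Disjoint (Rfam s).verts (Rfam s').verts)
    {v : V} (hv : v ∈ D.sideA e) : pPhi Wit v = v := by
  by_cases hb : v ∈ D.bough e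
  · exact L_phi_sep hst hdj (aux_sideA_inter_bough e hv hb)
  · exact L_phi_out hst hdj hb

lemma L_Br_out (hst : ∀ s ∈ D.sep e, (Rfam s).f 0 = s)
    (hdj : ∀ s ∈ D.sep e, ∀ s' ∈ D.sep e, s ≠ s' →
      Disjoint (Rfam s).verts (Rfam s').verts)
    {v : V} (hv : v ∉ D.bough e) :
    {w | w ∈ pVerts Wit ∧ pPhi Wit w = v} = {v} := by
  ext w
  constructor
  · rintro ⟨hwv, hphi⟩
    by_cases hwW : w ∈ Wit.Wcopy.H.verts
    · rw [L_phiW hwW] at hphi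
      exact absurd (hphi ▸ (Wit.Wcopy.φ w).2) hv
    · by_cases hwS : ∃ s, s ∈ D.sep e ∧ w ∈ pSeg Wit s
      · obtain ⟨s, hs, hw⟩ := hwS
        rw [L_phi_seg hst hdj hs hw] at hphi
        exact absurd (aux_sep_subset_bough e (hphi ▸ hs)) hv
      · rw [L_phi_id hwW hwS] at hphi
        exact hphi
  · rintro rfl
    exact ⟨Or.inl (aux_sideA_of_not_bough e hv), L_phi_out hst hdj hv⟩

lemma L_Br_in (hst : ∀ s ∈ D.sep e, (Rfam s).f 0 = s)
    (hdj : ∀ s ∈ D.sep e, ∀ s' ∈ D.sep e, s ≠ s' →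
      Disjoint (Rfam s).verts (Rfam s').verts)
    {v : V} (hv : v ∈ D.bough e) (hv2 : v ∉ D.sep e) :
    {w | w ∈ pVerts Wit ∧ pPhi Wit w = v} =
      {w | w ∈ Wit.Wcopy.H.verts ∧ (↑(Wit.Wcopy.φ w) : V) = v} := by
  ext w
  constructor
  · rintro ⟨hwv, hphi⟩
    by_cases hwW : w ∈ Wit.Wcopy.H.verts
    · exact ⟨hwW, by rwa [L_phiW hwW] at hphi⟩
    · by_cases hwS : ∃ s, s ∈ D.sep e ∧ w ∈ pSeg Wit s
      · obtain ⟨s, hs, hw⟩ := hwS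
        rw [L_phi_seg hst hdj hs hw] at hphi
        exact absurd (hphi ▸ hs) hv2
      · rw [L_phi_id hwW hwS] at hphi
        subst hphi
        rcases hwv with h | h | ⟨s, hs, hseg⟩
        · exact absurd (aux_sideA_inter_bough e h hv) hv2
        · exact absurd h hwW
        · exact absurd ⟨s, hs, hseg⟩ hwS
  · rintro ⟨h1, h2⟩
    exact ⟨Or.inr (Or.inl h1), by rw [L_phiW h1]; exact h2⟩

lemma L_Br_sep (hst : ∀ s ∈ D.sep e, (Rfam s).f 0 = s)
    (hdj : ∀ s ∈ D.sep e, ∀ s' ∈ D.sep e, s ≠ s' →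
      Disjoint (Rfam s).verts (Rfam s').verts)
    {s : V} (hs : s ∈ D.sep e) :
    {w | w ∈ pVerts Wit ∧ pPhi Wit w = s} =
      pSeg Wit s ∪ {w | w ∈ Wit.Wcopy.H.verts ∧ (↑(Wit.Wcopy.φ w) : V) = s} := by
  ext w
  constructor
  · rintro ⟨hwv, hphi⟩
    by_cases hwW : w ∈ Wit.Wcopy.H.verts
    · exact Or.inr ⟨hwW, by rwa [L_phiW hwW] at hphi⟩
    · by_cases hwS : ∃ s', s' ∈ D.sep e ∧ w ∈ pSeg Wit s'
      · obtain ⟨s', hs', hw⟩ := hwS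
        rw [L_phi_seg hst hdj hs' hw] at hphi
        exact Or.inl (hphi ▸ hw)
      · rw [L_phi_id hwW hwS] at hphi
        subst hphi
        exact Or.inl (L_self_seg hst hs)
  · rintro (h | ⟨h1, h2⟩)
    · exact ⟨Or.inr (Or.inr ⟨s, hs, h⟩), L_phi_seg hst hdj hs h⟩
    · exact ⟨Or.inr (Or.inl h1), by rw [L_phiW h1]; exact h2⟩

end PushOut

section ConnAux
open scoped Classical

variable {G : SimpleGraph V} {D : RootedTreeDecomp G T} {e : D.Edge}
  {Rfam : V → Ray G} {n : ℕ} {Wit : SelfSimilarityWitness D e Rfam n}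

lemma L_singleton_conn (H : G.Subgraph) (v : V) : (H.induce {v}).Connected := by
  refine (SimpleGraph.Subgraph.singletonSubgraph_connected (v := v)).mono ⟨?_, ?_⟩ ?_
  · simp [SimpleGraph.singletonSubgraph]
  · intro a b hab
    simp only [SimpleGraph.singletonSubgraph_adj, Pi.bot_apply] at hab
    exact hab.elim
  · simp [SimpleGraph.singletonSubgraph]

lemma L_pair_conn {H : G.Subgraph} {u v : V} (h : H.Adj u v) :
    (H.induce {u, v}).Connected := by
  refine (SimpleGraph.Subgraph.subgraphOfAdj_connected (H.adj_sub h)).mono ⟨?_, ?_⟩ ?_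
  · simp [SimpleGraph.subgraphOfAdj]
  · intro a b hab
    simp only [SimpleGraph.subgraphOfAdj_adj] at hab
    rw [Sym2.eq_iff] at hab
    rcases hab with ⟨rfl, rfl⟩ | ⟨rfl, rfl⟩
    · exact ⟨by simp, by simp, h⟩
    · exact ⟨by simp, by simp, h.symm⟩
  · simp [SimpleGraph.subgraphOfAdj]

lemma L_sup_conn {H : G.Subgraph} {X Y : Set V}
    (hX : (H.induce X).Connected) (hY : (H.induce Y).Connected)
    (hns : (X ∩ Y).Nonempty) : (H.induce (X ∪ Y)).Connected := by
  refine (SimpleGraph.Subgraph.connected_sup hX.preconnected hY.preconnected ?_).mono ⟨?_, ?_⟩ ?_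
  · rwa [SimpleGraph.Subgraph.verts_inf]
  · rw [SimpleGraph.Subgraph.verts_sup]
    exact subset_rfl
  · rintro a b (⟨h1, h2, h3⟩ | ⟨h1, h2, h3⟩)
    · exact ⟨Or.inl h1, Or.inl h2, h3⟩
    · exact ⟨Or.inr h1, Or.inr h2, h3⟩
  · rw [SimpleGraph.Subgraph.verts_sup]
    rfl

lemma L_W_le (Wit : SelfSimilarityWitness D e Rfam n) (X : Set V) :
    Wit.Wcopy.H.induce X ≤ (pH Wit).induce X := by
  constructor
  · exact le_of_eq rfl
  · rintro a b ⟨hx, hy, hab⟩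
    exact ⟨hx, hy, Wit.Wcopy.H.adj_sub hab,
      Or.inr (Or.inl (Wit.Wcopy.H.edge_vert hab)),
      Or.inr (Or.inl (Wit.Wcopy.H.edge_vert hab.symm)),
      Or.inr (Or.inl hab)⟩

lemma L_W_conn (Wit : SelfSimilarityWitness D e Rfam n) (v : D.bough e) :
    ((pH Wit).induce {w | w ∈ Wit.Wcopy.H.verts ∧ (↑(Wit.Wcopy.φ w) : V) = ↑v}).Connected := by
  have h0 := Wit.Wcopy.branch_connected v
  have hset : {w | w ∈ Wit.Wcopy.H.verts ∧ Wit.Wcopy.φ w = v} =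
      {w | w ∈ Wit.Wcopy.H.verts ∧ (↑(Wit.Wcopy.φ w) : V) = ↑v} := by
    ext w
    exact and_congr_right fun _ => Subtype.ext_iff
  rw [hset] at h0
  exact h0.mono (L_W_le Wit _) rfl

lemma L_seg_conn {s : V} (hs : s ∈ D.sep e) : ((pH Wit).induce (pSeg Wit s)).Connected := by
  have main : ∀ m, m ≤ pK Wit s →
      ((pH Wit).induce {w | ∃ k ≤ m, (Rfam s).f k = w}).Connected := by
    intro m
    induction m with
    | zero =>
      intro _
      have hset : {w | ∃ k ≤ 0, (Rfam s).f k = w} = {(Rfam s).f 0} := by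
        ext w
        simp [Nat.le_zero, eq_comm]
      rw [hset]
      exact L_singleton_conn _ _
    | succ m ih =>
      intro hm
      have h1 := ih (by omega)
      have hmem1 : (Rfam s).f m ∈ pVerts Wit :=
        Or.inr (Or.inr ⟨s, hs, m, by omega, rfl⟩)
      have hmem2 : (Rfam s).f (m + 1) ∈ pVerts Wit :=
        Or.inr (Or.inr ⟨s, hs, m + 1, by omega, rfl⟩)
      have hadj : (pH Wit).Adj ((Rfam s).f m) ((Rfam s).f (m + 1)) :=
        ⟨(Rfam s).adj m, hmem1, hmem2,
          Or.inr (Or.inr ⟨s, hs, m, by omega, Or.inl ⟨rfl, rfl⟩⟩)⟩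
      have h2 := L_pair_conn hadj
      have hset : {w | ∃ k ≤ m, (Rfam s).f k = w} ∪ {(Rfam s).f m, (Rfam s).f (m + 1)} =
          {w | ∃ k ≤ m + 1, (Rfam s).f k = w} := by
        ext w
        constructor
        · rintro (⟨k, hk, rfl⟩ | (rfl | rfl))
          · exact ⟨k, by omega, rfl⟩
          · exact ⟨m, by omega, rfl⟩
          · exact ⟨m + 1, le_rfl, rfl⟩
        · rintro ⟨k, hk, rfl⟩
          rcases Nat.lt_or_ge k (m + 1) with h | h
          · exact Or.inl ⟨k, by omega, rfl⟩
          · have : k = m + 1 := by omega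
            rw [this]
            exact Or.inr (Or.inr rfl)
      rw [← hset]
      exact L_sup_conn h1 h2 ⟨(Rfam s).f m, ⟨m, le_rfl, rfl⟩, Or.inl rfl⟩
  exact main (pK Wit s) le_rfl

end ConnAux

/-- For each edge `e`, each `n`, and each witness `Wit` of the
self-similarity of the bough `B(e)` of distance at least `n`, the amalgam
`G[A(e)] ⊕_{R_e} W` is a well-defined inflated copy of `G` inside `G` (a push-out
of `G` along `e` to depth `n`): its branch sets are `{v}` for `v ∉ B(e)`, the
`W`-branch set for `v ∈ B(e) ∖ S(e)`, and, for `s ∈ S(e)`, the initial segment of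
`R_{e,s}` up to its first vertex in `W` together with the `W`-branch set of `s`. -/
theorem pushout_of_selfSimilarity_witness
    (G : SimpleGraph V) (hlf : LocFin G) (hconn : G.Connected)
    (D : RootedTreeDecomp G T) (hD : Extensive D)
    (e : D.Edge) (ω : Set (Ray G)) (hω : IsEnd G ω)
    (Rfam : V → Ray G)
    (hstart : ∀ s ∈ D.sep e, (Rfam s).f 0 = s ∧ Rfam s ∈ ω)
    (hdisj : ∀ s ∈ D.sep e, ∀ s' ∈ D.sep e, s ≠ s' →
      Disjoint (Rfam s).verts (Rfam s').verts)
    (n : ℕ) (Wit : SelfSimilarityWitness D e Rfam n) :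
    ∃ G' : InflatedCopy G G,
      (∀ v : V, v ∉ D.bough e → G'.branch v = {v}) ∧
      (∀ v : V, v ∈ D.bough e → v ∉ D.sep e →
        G'.branch v = {w : V | w ∈ Wit.Wcopy.H.verts ∧ (↑(Wit.Wcopy.φ w) : V) = v}) ∧
      ∀ s ∈ D.sep e, ∃ K : ℕ, (Rfam s).f K ∈ Wit.Wcopy.H.verts ∧
        (∀ k < K, (Rfam s).f k ∉ Wit.Wcopy.H.verts) ∧
        G'.branch s = {w : V | ∃ k ≤ K, (Rfam s).f k = w} ∪
          {w : V | w ∈ Wit.Wcopy.H.verts ∧ (↑(Wit.Wcopy.φ w) : V) = s} := by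
  classical
  have hst : ∀ s ∈ D.sep e, (Rfam s).f 0 = s := fun s hs => (hstart s hs).1
  refine ⟨⟨pH Wit, pPhi Wit, ?_, ?_, ?_, ?_, ?_⟩, ?_, ?_, ?_⟩
  · -- branch_nonempty
    intro v
    by_cases hvb : v ∈ D.bough e
    · by_cases hvs : v ∈ D.sep e
      · exact ⟨v, Or.inr (Or.inr ⟨v, hvs, L_self_seg hst hvs⟩), L_phi_sep hst hdisj hvs⟩
      · obtain ⟨w, hw1, hw2⟩ := Wit.Wcopy.branch_nonempty ⟨v, hvb⟩
        exact ⟨w, Or.inr (Or.inl hw1), by rw [L_phiW hw1, hw2]⟩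
    · exact ⟨v, Or.inl (aux_sideA_of_not_bough e hvb), L_phi_out hst hdisj hvb⟩
  · -- branch_connected
    intro v
    show ((pH Wit).induce {w | w ∈ pVerts Wit ∧ pPhi Wit w = v}).Connected
    by_cases hvb : v ∈ D.bough e
    · by_cases hvs : v ∈ D.sep e
      · rw [L_Br_sep hst hdisj hvs]
        refine L_sup_conn (L_seg_conn hvs) (L_W_conn Wit ⟨v, hvb⟩) ?_
        exact ⟨(Rfam v).f (pK Wit v), ⟨pK Wit v, le_rfl, rfl⟩,
          L_Kspec Wit hvs, (L_K_sep hst Wit hvs).2⟩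
      · rw [L_Br_in hst hdisj hvb hvs]
        exact L_W_conn Wit ⟨v, hvb⟩
    · rw [L_Br_out hst hdisj hvb]
      exact L_singleton_conn _ _
  · -- adj_of_edge
    rintro a b ⟨hG, ha, hb, (⟨h1, h2⟩ | h | ⟨s, hs, k, hk, hor⟩)⟩ hne
    · rwa [L_phi_sideA hst hdisj h1, L_phi_sideA hst hdisj h2]
    · have ha' := Wit.Wcopy.H.edge_vert h
      have hb' := Wit.Wcopy.H.edge_vert h.symm
      rw [L_phiW ha', L_phiW hb'] at hne ⊢
      have hWne : Wit.Wcopy.φ a ≠ Wit.Wcopy.φ b := fun hh => hne (congrArg _ hh)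
      exact (show G.Adj _ _ ∧ _ from Wit.Wcopy.adj_of_edge h hWne).1
    · exfalso
      apply hne
      rcases hor with ⟨hka, hkb⟩ | ⟨hka, hkb⟩
      · rw [← hka, ← hkb, L_phi_seg hst hdisj hs ⟨k, by omega, rfl⟩,
          L_phi_seg hst hdisj hs ⟨k + 1, by omega, rfl⟩]
      · rw [← hka, ← hkb, L_phi_seg hst hdisj hs ⟨k, by omega, rfl⟩,
          L_phi_seg hst hdisj hs ⟨k + 1, by omega, rfl⟩]
  · -- edge_of_adj
    intro v w hvw
    by_cases hv : v ∈ D.bough e ∧ v ∉ D.sep e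
    · have hwb : w ∈ D.bough e := by
        by_contra hc
        exact hv.2 (aux_edge_into_bough e hvw.symm hc hv.1)
      have hbarB : (D.barB e).Adj ⟨v, hv.1⟩ ⟨w, hwb⟩ := show G.Adj v w ∧ _ from ⟨hvw, fun hc => hv.2 hc.1⟩
      obtain ⟨a, b, hab, hfa, hfb⟩ := Wit.Wcopy.edge_of_adj hbarB
      refine ⟨a, b, ⟨Wit.Wcopy.H.adj_sub hab, Or.inr (Or.inl (Wit.Wcopy.H.edge_vert hab)),
        Or.inr (Or.inl (Wit.Wcopy.H.edge_vert hab.symm)), Or.inr (Or.inl hab)⟩, ?_, ?_⟩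
      · rw [L_phiW (Wit.Wcopy.H.edge_vert hab), hfa]
      · rw [L_phiW (Wit.Wcopy.H.edge_vert hab.symm), hfb]
    · by_cases hw : w ∈ D.bough e ∧ w ∉ D.sep e
      · have hvb : v ∈ D.bough e := by
          by_contra hc
          exact hw.2 (aux_edge_into_bough e hvw hc hw.1)
        have hbarB : (D.barB e).Adj ⟨v, hvb⟩ ⟨w, hw.1⟩ := show G.Adj v w ∧ _ from ⟨hvw, fun hc => hw.2 hc.2⟩
        obtain ⟨a, b, hab, hfa, hfb⟩ := Wit.Wcopy.edge_of_adj hbarB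
        refine ⟨a, b, ⟨Wit.Wcopy.H.adj_sub hab, Or.inr (Or.inl (Wit.Wcopy.H.edge_vert hab)),
          Or.inr (Or.inl (Wit.Wcopy.H.edge_vert hab.symm)), Or.inr (Or.inl hab)⟩, ?_, ?_⟩
        · rw [L_phiW (Wit.Wcopy.H.edge_vert hab), hfa]
        · rw [L_phiW (Wit.Wcopy.H.edge_vert hab.symm), hfb]
      · have hvA : v ∈ D.sideA e := by
          rcases not_and_or.mp hv with h | h
          · exact aux_sideA_of_not_bough e h
          · exact aux_sep_subset_sideA e (not_not.mp h)
        have hwA : w ∈ D.sideA e := by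
          rcases not_and_or.mp hw with h | h
          · exact aux_sideA_of_not_bough e h
          · exact aux_sep_subset_sideA e (not_not.mp h)
        exact ⟨v, w, ⟨hvw, Or.inl hvA, Or.inl hwA, Or.inl ⟨hvA, hwA⟩⟩,
          L_phi_sideA hst hdisj hvA, L_phi_sideA hst hdisj hwA⟩
  · -- edge_unique
    intro v w hvw a b a' b' hab hab' hpa hpb hpa' hpb'
    by_cases hcase : (v ∈ D.bough e ∧ v ∉ D.sep e) ∨ (w ∈ D.bough e ∧ w ∉ D.sep e)
    · have hvb : v ∈ D.bough e := by
        rcases hcase with h | h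
        · exact h.1
        · by_contra hc
          exact h.2 (aux_edge_into_bough e hvw hc h.1)
      have hwb : w ∈ D.bough e := by
        rcases hcase with h | h
        · by_contra hc
          exact h.2 (aux_edge_into_bough e hvw.symm hc h.1)
        · exact h.1
      have hns : ¬(v ∈ D.sep e ∧ w ∈ D.sep e) := by
        rcases hcase with h | h
        · exact fun hc => h.2 hc.1
        · exact fun hc => h.2 hc.2
      have hbarB : (D.barB e).Adj ⟨v, hvb⟩ ⟨w, hwb⟩ := show G.Adj v w ∧ _ from ⟨hvw, hns⟩
      have hforce : ∀ x y : V, (pH Wit).Adj x y → pPhi Wit x = v → pPhi Wit y = w →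
          Wit.Wcopy.H.Adj x y ∧ Wit.Wcopy.φ x = ⟨v, hvb⟩ ∧ Wit.Wcopy.φ y = ⟨w, hwb⟩ := by
        rintro x y ⟨hG2, hx, hy, (⟨h1, h2⟩ | h | ⟨s, hs, k, hk, hor⟩)⟩ hpx hpy
        · exfalso
          rw [L_phi_sideA hst hdisj h1] at hpx
          rw [L_phi_sideA hst hdisj h2] at hpy
          subst hpx; subst hpy
          rcases hcase with hh | hh
          · exact hh.2 (aux_sideA_inter_bough e h1 hh.1)
          · exact hh.2 (aux_sideA_inter_bough e h2 hh.1)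
        · refine ⟨h, ?_, ?_⟩
          · apply Subtype.ext
            rwa [L_phiW (Wit.Wcopy.H.edge_vert h)] at hpx
          · apply Subtype.ext
            rwa [L_phiW (Wit.Wcopy.H.edge_vert h.symm)] at hpy
        · exfalso
          have hxy : pPhi Wit x = pPhi Wit y := by
            rcases hor with ⟨hk1, hk2⟩ | ⟨hk1, hk2⟩ <;>
              rw [← hk1, ← hk2, L_phi_seg hst hdisj hs ⟨k, by omega, rfl⟩,
                L_phi_seg hst hdisj hs ⟨k + 1, by omega, rfl⟩]
          rw [hpx, hpy] at hxy
          exact hvw.ne hxy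
      obtain ⟨h1, h2, h3⟩ := hforce a b hab hpa hpb
      obtain ⟨h1', h2', h3'⟩ := hforce a' b' hab' hpa' hpb'
      exact Wit.Wcopy.edge_unique hbarB a b a' b' h1 h1' h2 h3 h2' h3'
    · obtain ⟨hnv, hnw⟩ := not_or.mp hcase
      have hforce : ∀ x y : V, (pH Wit).Adj x y → pPhi Wit x = v → pPhi Wit y = w →
          x = v ∧ y = w := by
        rintro x y ⟨hG2, hx, hy, (⟨h1, h2⟩ | h | ⟨s, hs, k, hk, hor⟩)⟩ hpx hpy
        · rw [L_phi_sideA hst hdisj h1] at hpx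
          rw [L_phi_sideA hst hdisj h2] at hpy
          exact ⟨hpx, hpy⟩
        · exfalso
          have hxv := Wit.Wcopy.H.edge_vert h
          have hyv := Wit.Wcopy.H.edge_vert h.symm
          rw [L_phiW hxv] at hpx
          rw [L_phiW hyv] at hpy
          have hvbb : v ∈ D.bough e := hpx ▸ (Wit.Wcopy.φ x).2
          have hwbb : w ∈ D.bough e := hpy ▸ (Wit.Wcopy.φ y).2
          have hvs : v ∈ D.sep e := by
            rcases not_and_or.mp hnv with hh | hh
            · exact absurd hvbb hh
            · exact not_not.mp hh
          have hws : w ∈ D.sep e := by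
            rcases not_and_or.mp hnw with hh | hh
            · exact absurd hwbb hh
            · exact not_not.mp hh
          have hWne : Wit.Wcopy.φ x ≠ Wit.Wcopy.φ y :=
            fun hh => hvw.ne (by rw [← hpx, ← hpy, hh])
          exact (show G.Adj _ _ ∧ _ from Wit.Wcopy.adj_of_edge h hWne).2
            ⟨by rw [hpx]; exact hvs, by rw [hpy]; exact hws⟩
        · exfalso
          have hxy : pPhi Wit x = pPhi Wit y := by
            rcases hor with ⟨hk1, hk2⟩ | ⟨hk1, hk2⟩ <;>
              rw [← hk1, ← hk2, L_phi_seg hst hdisj hs ⟨k, by omega, rfl⟩,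
                L_phi_seg hst hdisj hs ⟨k + 1, by omega, rfl⟩]
          rw [hpx, hpy] at hxy
          exact hvw.ne hxy
      obtain ⟨e1, e2⟩ := hforce a b hab hpa hpb
      obtain ⟨e1', e2'⟩ := hforce a' b' hab' hpa' hpb'
      exact ⟨e1.trans e1'.symm, e2.trans e2'.symm⟩
  · -- branch of vertices outside the bough
    intro v hv
    exact L_Br_out hst hdisj hv
  · -- branch of inner vertices
    intro v hvb hvs
    exact L_Br_in hst hdisj hvb hvs
  · -- branch of separator vertices
    intro s hs
    exact ⟨pK Wit s, L_Kspec Wit hs, fun k hk => L_Kmin Wit hs hk,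
      L_Br_sep hst hdisj hs⟩

end Ubiquity
end

section
/- Let Γ be a graph, ε an end of Γ, and R = (R_i : i ∈ I) a finite family of disjoint ε-rays, and let i₁, i₂, j ∈ I be distinct. Then i₁ and i₂ belong to different components of RG(R) − j if and only if R_j separates R_{i₁} from R_{i₂}. -/
set_option autoImplicit false

namespace Ubiquity

variable {V W T : Type}

/-! ### Auxiliary material for Statement 10 -/

open SimpleGraph

section Aux

variable {Γ : SimpleGraph W}

lemma PathBetween.verts_finite {A B : Set W} (P : PathBetween Γ A B) : P.verts.Finite :=
  P.walk.support.finite_toSet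

/-- Reverse of a path between two sets. -/
def PathBetween.reverse {A B : Set W} (P : PathBetween Γ A B) : PathBetween Γ B A :=
  ⟨P.last, P.first, P.walk.reverse, P.isPath.reverse, P.last_mem, P.first_mem⟩

lemma PathBetween.verts_reverse {A B : Set W} (P : PathBetween Γ A B) :
    P.reverse.verts = P.verts := by
  ext v
  simp [PathBetween.verts, PathBetween.reverse]

lemma rayEquivAvoiding_symm {X : Set W} {R S : Ray Γ}
    (h : RayEquivAvoiding Γ X R S) : RayEquivAvoiding Γ X S R := by
  obtain ⟨P, hX, hd⟩ := h
  refine ⟨fun n => (P n).reverse, ?_, ?_⟩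
  · intro n v hv
    exact hX n v (by rwa [PathBetween.verts_reverse] at hv)
  · intro m n hmn
    rw [PathBetween.verts_reverse, PathBetween.verts_reverse]
    exact hd m n hmn

lemma rayEquivAvoiding_refl {X : Set W} {R : Ray Γ} (h : Disjoint R.verts X) :
    RayEquivAvoiding Γ X R R := by
  refine ⟨fun n => ⟨R.f n, R.f n, Walk.nil, Walk.IsPath.nil, ⟨n, rfl⟩, ⟨n, rfl⟩⟩, ?_, ?_⟩
  · intro n v hv
    have hv' : v = R.f n := by simpa [PathBetween.verts] using hv
    subst hv'
    exact fun hx => Set.disjoint_left.mp h ⟨n, rfl⟩ hx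
  · intro m n hmn
    rw [Set.disjoint_left]
    intro v hv hv'
    have h1 : v = R.f m := by simpa [PathBetween.verts] using hv
    have h2 : v = R.f n := by simpa [PathBetween.verts] using hv'
    exact hmn (R.inj (h1.symm.trans h2))

lemma exists_path_avoiding {X : Set W} {R S : Ray Γ}
    (h : RayEquivAvoiding Γ X R S) {F : Set W} (hF : F.Finite) :
    ∃ P : PathBetween Γ R.verts S.verts, ∀ v ∈ P.verts, v ∉ X ∪ F := by
  obtain ⟨P, hX, hd⟩ := h
  have hbad : {m : ℕ | ¬ Disjoint (P m).verts F}.Finite := by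
    have hsub : {m : ℕ | ¬ Disjoint (P m).verts F} ⊆ ⋃ v ∈ F, {m : ℕ | v ∈ (P m).verts} := by
      intro m hm
      rw [Set.mem_setOf_eq, Set.not_disjoint_iff] at hm
      obtain ⟨v, hv1, hv2⟩ := hm
      exact Set.mem_biUnion hv2 hv1
    refine Set.Finite.subset (Set.Finite.biUnion hF fun v _ => ?_) hsub
    apply Set.Subsingleton.finite
    intro m₁ h₁ m₂ h₂
    by_contra hne
    exact Set.disjoint_left.mp (hd m₁ m₂ hne) h₁ h₂
  obtain ⟨m, hm⟩ := hbad.infinite_compl.nonempty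
  have hdisj : Disjoint (P m).verts F := not_not.mp hm
  refine ⟨P m, fun v hv hmem => ?_⟩
  rcases hmem with hx | hf
  · exact hX m v hv hx
  · exact Set.disjoint_left.mp hdisj hv hf

/-- State for building an infinite disjoint family of paths. -/
structure AvoidState (Γ : SimpleGraph W) (A B X : Set W) where
  p : PathBetween Γ A B
  F : Set W
  hF : F.Finite
  hsub : p.verts ⊆ F
  havoid : ∀ v ∈ p.verts, v ∉ X

noncomputable def avoidSeq {A B X : Set W}
    (key : ∀ F : Set W, F.Finite → ∃ p : PathBetween Γ A B, ∀ v ∈ p.verts, v ∉ X ∪ F) :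
    ℕ → AvoidState Γ A B X
  | 0 =>
    { p := (key ∅ Set.finite_empty).choose
      F := (key ∅ Set.finite_empty).choose.verts
      hF := PathBetween.verts_finite _
      hsub := subset_rfl
      havoid := fun v hv hx => (key ∅ Set.finite_empty).choose_spec v hv (Or.inl hx) }
  | n + 1 =>
    { p := (key (avoidSeq key n).F (avoidSeq key n).hF).choose
      F := (avoidSeq key n).F ∪ (key (avoidSeq key n).F (avoidSeq key n).hF).choose.verts
      hF := (avoidSeq key n).hF.union (PathBetween.verts_finite _)
      hsub := Set.subset_union_right
      havoid := fun v hv hx =>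
        (key (avoidSeq key n).F (avoidSeq key n).hF).choose_spec v hv (Or.inl hx) }

lemma avoidSeq_avoid_succ {A B X : Set W}
    (key : ∀ F : Set W, F.Finite → ∃ p : PathBetween Γ A B, ∀ v ∈ p.verts, v ∉ X ∪ F)
    (n : ℕ) : ∀ v ∈ (avoidSeq key (n + 1)).p.verts, v ∉ (avoidSeq key n).F :=
  fun v hv hx =>
    (key (avoidSeq key n).F (avoidSeq key n).hF).choose_spec v hv (Or.inr hx)

lemma avoidSeq_F_mono {A B X : Set W}
    (key : ∀ F : Set W, F.Finite → ∃ p : PathBetween Γ A B, ∀ v ∈ p.verts, v ∉ X ∪ F)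
    {m n : ℕ} (h : m ≤ n) : (avoidSeq key m).F ⊆ (avoidSeq key n).F := by
  induction n with
  | zero =>
    have : m = 0 := by omega
    subst this; exact subset_rfl
  | succ n ih =>
    rcases Nat.lt_or_ge m (n + 1) with h' | h'
    · exact (ih (by omega)).trans Set.subset_union_left
    · have : m = n + 1 := by omega
      subst this; exact subset_rfl

lemma avoidSeq_disjoint {A B X : Set W}
    (key : ∀ F : Set W, F.Finite → ∃ p : PathBetween Γ A B, ∀ v ∈ p.verts, v ∉ X ∪ F)
    {m n : ℕ} (h : m < n) :
    Disjoint (avoidSeq key m).p.verts (avoidSeq key n).p.verts := by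
  obtain ⟨n', rfl⟩ : ∃ n', n = n' + 1 := ⟨n - 1, by omega⟩
  rw [Set.disjoint_left]
  intro v hv hv'
  exact avoidSeq_avoid_succ key n' v hv'
    (avoidSeq_F_mono key (by omega) ((avoidSeq key m).hsub hv))

lemma rayEquivAvoiding_of_key {X : Set W} {R S : Ray Γ}
    (key : ∀ F : Set W, F.Finite →
      ∃ p : PathBetween Γ R.verts S.verts, ∀ v ∈ p.verts, v ∉ X ∪ F) :
    RayEquivAvoiding Γ X R S := by
  refine ⟨fun n => (avoidSeq key n).p, fun n => (avoidSeq key n).havoid, ?_⟩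
  intro m n hmn
  rcases lt_or_gt_of_ne hmn with h | h
  · exact avoidSeq_disjoint key h
  · exact (avoidSeq_disjoint key h).symm

/-- Walk along a ray from its `a`-th to its `(a+d)`-th vertex. -/
def Ray.segUp (S : Ray Γ) (a : ℕ) : (d : ℕ) → Γ.Walk (S.f a) (S.f (a + d))
  | 0 => Walk.nil
  | d + 1 => (S.segUp a d).concat (S.adj (a + d))

lemma Ray.segUp_support (S : Ray Γ) (a : ℕ) :
    ∀ (d : ℕ), ∀ z ∈ (S.segUp a d).support, ∃ t, a ≤ t ∧ t ≤ a + d ∧ z = S.f t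
  | 0 => by
    intro z hz
    have : z = S.f a := by simpa [Ray.segUp] using hz
    exact ⟨a, le_rfl, le_rfl, this⟩
  | d + 1 => by
    intro z hz
    rw [show S.segUp a (d + 1) = (S.segUp a d).concat (S.adj (a + d)) from rfl,
      Walk.support_concat, List.mem_append] at hz
    rcases hz with hz | hz
    · obtain ⟨t, h1, h2, h3⟩ := Ray.segUp_support S a d z hz
      exact ⟨t, h1, by omega, h3⟩
    · have : z = S.f (a + d + 1) := by simpa [Nat.add_assoc] using hz
      exact ⟨a + d + 1, by omega, by omega, this⟩

lemma rayEquivAvoiding_trans {X : Set W} {R S T' : Ray Γ}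
    (hRS : RayEquivAvoiding Γ X R S) (hST : RayEquivAvoiding Γ X S T')
    (hSX : Disjoint S.verts X) : RayEquivAvoiding Γ X R T' := by
  classical
  apply rayEquivAvoiding_of_key
  intro F hF
  have hI : (S.f ⁻¹' F).Finite := hF.preimage S.inj.injOn
  obtain ⟨K, hK⟩ := hI.bddAbove
  have hF' : (F ∪ S.f '' Set.Iic K).Finite := hF.union ((Set.finite_Iic K).image _)
  obtain ⟨P, hP⟩ := exists_path_avoiding hRS hF'
  obtain ⟨k₁, hk₁⟩ := P.last_mem
  have hPlast : P.last ∈ P.verts := P.walk.end_mem_support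
  have hK1 : K < k₁ := by
    by_contra hc
    exact hP _ hPlast (Or.inr (Or.inr ⟨k₁, not_lt.mp hc, hk₁⟩))
  obtain ⟨Q, hQ⟩ := exists_path_avoiding hST (hF'.union P.verts_finite)
  obtain ⟨k₂, hk₂⟩ := Q.first_mem
  have hQfirst : Q.first ∈ Q.verts := Q.walk.start_mem_support
  have hK2 : K < k₂ := by
    by_contra hc
    exact hQ _ hQfirst (Or.inr (Or.inl (Or.inr ⟨k₂, not_lt.mp hc, hk₂⟩)))
  have hmid : ∃ wmid : Γ.Walk (S.f k₁) (S.f k₂),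
      ∀ z ∈ wmid.support, ∃ t, K < t ∧ z = S.f t := by
    rcases le_total k₁ k₂ with h | h
    · obtain ⟨d, rfl⟩ := Nat.exists_eq_add_of_le h
      refine ⟨S.segUp k₁ d, fun z hz => ?_⟩
      obtain ⟨t, h1, _, h3⟩ := S.segUp_support k₁ d z hz
      exact ⟨t, by omega, h3⟩
    · obtain ⟨d, rfl⟩ := Nat.exists_eq_add_of_le h
      refine ⟨(S.segUp k₂ d).reverse, fun z hz => ?_⟩
      rw [Walk.support_reverse, List.mem_reverse] at hz
      obtain ⟨t, h1, _, h3⟩ := S.segUp_support k₂ d z hz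
      exact ⟨t, by omega, h3⟩
  obtain ⟨wmid, hwmid⟩ := hmid
  set wfull := (P.walk.copy rfl hk₁.symm).append
    (wmid.append (Q.walk.copy hk₂.symm rfl)) with hwfull
  have hsupp : ∀ z ∈ wfull.support, z ∈ P.verts ∨ z ∈ wmid.support ∨ z ∈ Q.verts := by
    intro z hz
    rw [hwfull, Walk.mem_support_append_iff, Walk.mem_support_append_iff,
      Walk.support_copy, Walk.support_copy] at hz
    exact hz
  refine ⟨⟨P.first, Q.last, wfull.bypass, wfull.bypass_isPath, P.first_mem, Q.last_mem⟩,
    fun v hv => ?_⟩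
  have hv' : v ∈ wfull.support := wfull.support_bypass_subset hv
  rcases hsupp v hv' with h | h | h
  · intro hmem
    rcases hmem with hx | hf
    · exact hP v h (Or.inl hx)
    · exact hP v h (Or.inr (Or.inl hf))
  · obtain ⟨t, ht, rfl⟩ := hwmid v h
    intro hmem
    rcases hmem with hx | hf
    · exact Set.disjoint_left.mp hSX ⟨t, rfl⟩ hx
    · exact absurd (hK hf) (by omega)
  · intro hmem
    rcases hmem with hx | hf
    · exact hQ v h (Or.inl hx)
    · exact hQ v h (Or.inr (Or.inl (Or.inl hf)))

lemma LinkedRays.rayEquivAvoiding {I : Type} {R : I → Ray Γ} {a b : I}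
    (h : LinkedRays Γ R a b) {j : I} (hja : j ≠ a) (hjb : j ≠ b) :
    RayEquivAvoiding Γ (R j).verts (R a) (R b) := by
  obtain ⟨P, hd, hk⟩ := h
  exact ⟨P, fun n v hv hx => Set.disjoint_left.mp (hk n j hja hjb) hv hx, hd⟩

lemma Ray.IsTailOf.verts_subset {R' R : Ray Γ} (h : R'.IsTailOf R) :
    R'.verts ⊆ R.verts := by
  obtain ⟨k, hk⟩ := h
  rintro v ⟨m, rfl⟩
  exact ⟨m + k, (hk m).symm⟩

lemma Ray.isTailOf_self (R : Ray Γ) : R.IsTailOf R := ⟨0, fun _ => rfl⟩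

lemma chain_equiv {n : ℕ} {R : Fin n → Ray Γ}
    (hdisj : ∀ a b : Fin n, a ≠ b → Disjoint (R a).verts (R b).verts) {j : Fin n} :
    ∀ {a i₂ : Fin n} (w : (rayGraph Γ R).Walk a i₂), (∀ x ∈ w.support, x ≠ j) →
      RayEquivAvoiding Γ (R j).verts (R a) (R i₂) := by
  intro a i₂ w
  induction w with
  | nil =>
    intro h
    exact rayEquivAvoiding_refl (hdisj _ _ (h _ (Walk.start_mem_support _)))
  | @cons u v w' hadj q ih =>
    intro h
    have huj : u ≠ j := h _ (Walk.start_mem_support _)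
    have hvj : v ≠ j := h _ (by rw [Walk.support_cons]; exact List.mem_cons_of_mem _ q.start_mem_support)
    have h1 : RayEquivAvoiding Γ (R j).verts (R u) (R v) := by
      rcases hadj.2 with hl | hl
      · exact hl.rayEquivAvoiding (Ne.symm huj) (Ne.symm hvj)
      · exact rayEquivAvoiding_symm (hl.rayEquivAvoiding (Ne.symm hvj) (Ne.symm huj))
    refine rayEquivAvoiding_trans h1 (ih fun x hx => h x ?_) (hdisj _ _ hvj)
    rw [Walk.support_cons]
    exact List.mem_cons_of_mem _ hx

lemma first_ray_vertex {n : ℕ} (R : Fin n → Ray Γ) :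
    ∀ {u v : W} (w : Γ.Walk u v), w.IsPath → (∃ b, v ∈ (R b).verts) →
      ∃ (k : Fin n) (y : W) (s : Γ.Walk u y), y ∈ (R k).verts ∧ s.IsPath ∧
        (∀ z ∈ s.support, z ∈ w.support) ∧
        ∀ z ∈ s.support, z ≠ y → ∀ k' : Fin n, z ∉ (R k').verts := by
  intro u v w
  induction w with
  | @nil u =>
    intro _ hb
    obtain ⟨b, hb⟩ := hb
    refine ⟨b, u, Walk.nil, hb, Walk.IsPath.nil, fun z hz => hz, fun z hz hzy => ?_⟩
    have : z = u := by simpa using hz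
    exact absurd this hzy
  | @cons u u' v hadj q ih =>
    intro hp hb
    by_cases hu : ∃ k, u ∈ (R k).verts
    · obtain ⟨k, hk⟩ := hu
      refine ⟨k, u, Walk.nil, hk, Walk.IsPath.nil, fun z hz => ?_, fun z hz hzy => ?_⟩
      · have : z = u := by simpa using hz
        subst this; exact Walk.start_mem_support _
      · have : z = u := by simpa using hz
        exact absurd this hzy
    · obtain ⟨k, y, s, hy, hsp, hsub, hoff⟩ := ih hp.of_cons ⟨hb.choose, hb.choose_spec⟩
      have hu_not : u ∉ s.support := fun hc =>
        ((Walk.cons_isPath_iff hadj q).mp hp).2 (hsub u hc)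
      refine ⟨k, y, Walk.cons hadj s, hy, hsp.cons hu_not, fun z hz => ?_, fun z hz hzy => ?_⟩
      · rw [Walk.support_cons, List.mem_cons] at hz
        rw [Walk.support_cons]
        rcases hz with rfl | hz
        · exact List.mem_cons_self
        · exact List.mem_cons_of_mem _ (hsub z hz)
      · rw [Walk.support_cons, List.mem_cons] at hz
        rcases hz with rfl | hz
        · intro k' hk'
          exact hu ⟨k', hk'⟩
        · exact hoff z hz hzy

lemma crossing_segment {n : ℕ} (R : Fin n → Ray Γ)
    (hdisj : ∀ a b : Fin n, a ≠ b → Disjoint (R a).verts (R b).verts)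
    (Cset : Set (Fin n)) (j : Fin n) :
    ∀ (L : ℕ) {u v : W} (w : Γ.Walk u v), w.length ≤ L → w.IsPath →
      (∃ a ∈ Cset, u ∈ (R a).verts) → (∃ b, b ∉ Cset ∧ v ∈ (R b).verts) →
      (∀ z ∈ w.support, z ∉ (R j).verts) →
      ∃ (a b : Fin n) (x y : W) (s : Γ.Walk x y), a ∈ Cset ∧ b ∉ Cset ∧
        x ∈ (R a).verts ∧ y ∈ (R b).verts ∧ s.IsPath ∧
        (∀ z ∈ s.support, z ∈ w.support) ∧
        ∀ z ∈ s.support, z ≠ x → z ≠ y → ∀ k : Fin n, z ∉ (R k).verts := by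
  classical
  intro L
  induction L with
  | zero =>
    intro u v w hlen _ ha hb _
    obtain ⟨a, haC, hua⟩ := ha
    obtain ⟨b, hbC, hvb⟩ := hb
    cases w with
    | nil =>
      by_cases hab : a = b
      · subst hab; exact absurd haC hbC
      · exact absurd hvb (Set.disjoint_left.mp (hdisj a b hab) hua)
    | cons h q => rw [Walk.length_cons] at hlen; omega
  | succ L ihL =>
    intro u v w hlen hp ha hb hj
    obtain ⟨a, haC, hua⟩ := ha
    obtain ⟨b, hbC, hvb⟩ := hb
    cases w with
    | nil =>
      by_cases hab : a = b
      · subst hab; exact absurd haC hbC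
      · exact absurd hvb (Set.disjoint_left.mp (hdisj a b hab) hua)
    | @cons u u' v hadj q =>
      obtain ⟨k, y, s, hy, hsp, hsub, hoff⟩ :=
        first_ray_vertex R q hp.of_cons ⟨b, hvb⟩
      by_cases hkC : k ∈ Cset
      · -- recurse on the rest of the walk after y
        have hymem : y ∈ q.support := hsub y s.end_mem_support
        have hlen' : (q.dropUntil y hymem).length ≤ L := by
          have h1 := q.length_dropUntil_le hymem
          rw [Walk.length_cons] at hlen
          omega
        obtain ⟨a', b', x', y', s', h1, h2, h3, h4, h5, h6, h7⟩ :=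
          ihL (q.dropUntil y hymem) hlen' (hp.of_cons.dropUntil hymem)
            ⟨k, hkC, hy⟩ ⟨b, hbC, hvb⟩
            (fun z hz => hj z (by
              rw [Walk.support_cons]
              exact List.mem_cons_of_mem _ (q.support_dropUntil_subset hymem hz)))
        refine ⟨a', b', x', y', s', h1, h2, h3, h4, h5, fun z hz => ?_, h7⟩
        rw [Walk.support_cons]
        exact List.mem_cons_of_mem _ (q.support_dropUntil_subset hymem (h6 z hz))
      · -- the segment from u to y is a crossing segment
        have hu_not : u ∉ s.support := fun hc =>
          ((Walk.cons_isPath_iff hadj q).mp hp).2 (hsub u hc)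
        refine ⟨a, k, u, y, Walk.cons hadj s, haC, hkC, hua, hy, hsp.cons hu_not,
          fun z hz => ?_, fun z hz hzx hzy => ?_⟩
        · rw [Walk.support_cons, List.mem_cons] at hz
          rw [Walk.support_cons]
          rcases hz with rfl | hz
          · exact List.mem_cons_self
          · exact List.mem_cons_of_mem _ (hsub z hz)
        · rw [Walk.support_cons, List.mem_cons] at hz
          rcases hz with rfl | hz
          · exact absurd rfl hzx
          · exact hoff z hz hzy

end Aux

/-- `i₁` and `i₂` lie in different components of `RG(R) − j` iff
`R j` separates `R i₁` from `R i₂`. -/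
theorem rayGraph_components_iff_separates
    (Γ : SimpleGraph W) (ε : Set (Ray Γ)) (hε : IsEnd Γ ε)
    {n : ℕ} (R : Fin n → Ray Γ) (hR : DisjointRayFamily Γ ε R)
    (i₁ i₂ j : Fin n) (h12 : i₁ ≠ i₂) (h1j : i₁ ≠ j) (h2j : i₂ ≠ j) :
    ¬ ReachAvoid (rayGraph Γ R) {j} i₁ i₂ ↔ SeparatesRay Γ (R j) (R i₁) (R i₂) := by
  classical
  constructor
  · -- ¬ Reach → Separates
    intro hnr
    by_contra hns
    apply hnr
    rw [SeparatesRay] at hns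
    push_neg at hns
    obtain ⟨R', T'', htail1, htail2, hdis1, hdis2, hequiv⟩ := hns
    obtain ⟨P, hPX, hPd⟩ := hequiv
    set Cset : Set (Fin n) := {a | ReachAvoid (rayGraph Γ R) {j} i₁ a} with hCset
    have hi1C : i₁ ∈ Cset := by
      refine ⟨Walk.nil, fun x hx => ?_⟩
      have hx' : x = i₁ := by simpa using hx
      subst hx'
      simpa using h1j
    by_contra hi2C
    have hi2C' : i₂ ∉ Cset := hi2C
    have hmain := fun m : ℕ => crossing_segment R hR.2 Cset j ((P m).walk.length)
      (P m).walk le_rfl (P m).isPath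
      ⟨i₁, hi1C, htail1.verts_subset (P m).first_mem⟩
      ⟨i₂, hi2C', htail2.verts_subset (P m).last_mem⟩
      (fun z hz => hPX m z hz)
    choose a b x y s haC hbC hx hy hsp hsub hoff using hmain
    obtain ⟨⟨a₀, b₀⟩, hfib⟩ :
        ∃ p : Fin n × Fin n, Infinite ↑((fun m => (a m, b m)) ⁻¹' {p}) :=
      Finite.exists_infinite_fiber _
    haveI := hfib
    set e := Infinite.natEmbedding ((fun m => (a m, b m)) ⁻¹' {(a₀, b₀)}) with he
    set m : ℕ → ℕ := fun t => (e t).1 with hm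
    have hminj : Function.Injective m := fun t t' h => e.injective (Subtype.ext h)
    have hfab : ∀ t : ℕ, (a (m t), b (m t)) = (a₀, b₀) := fun t => (e t).2
    have hfa : ∀ t : ℕ, a (m t) = a₀ := fun t => congrArg Prod.fst (hfab t)
    have hfb : ∀ t : ℕ, b (m t) = b₀ := fun t => congrArg Prod.snd (hfab t)
    have ha₀C : a₀ ∈ Cset := by rw [← hfa 0]; exact haC (m 0)
    have hb₀C : b₀ ∉ Cset := by rw [← hfb 0]; exact hbC (m 0)
    have hne : a₀ ≠ b₀ := fun h => hb₀C (h ▸ ha₀C)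
    have hyb : ∀ t : ℕ, y (m t) ∈ (R b₀).verts := by
      intro t
      rw [← hfb t]
      exact hy (m t)
    have hxa : ∀ t : ℕ, x (m t) ∈ (R a₀).verts := by
      intro t
      rw [← hfa t]
      exact hx (m t)
    have hb₀j : b₀ ≠ j := by
      intro hbj
      refine hPX (m 0) (y (m 0)) (hsub (m 0) _ (s (m 0)).end_mem_support) ?_
      rw [← hbj]
      exact hyb 0
    have hlink : LinkedRays Γ R a₀ b₀ := by
      refine ⟨fun t =>
        { first := x (m t), last := y (m t), walk := s (m t), isPath := hsp (m t)
          first_mem := hxa t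
          last_mem := hyb t }, ?_, ?_⟩
      · intro t t' htt
        have hmm : m t ≠ m t' := fun h => htt (hminj h)
        refine Set.disjoint_left.mpr fun z hz hz' => ?_
        have hz1 : z ∈ (s (m t)).support := hz
        have hz2 : z ∈ (s (m t')).support := hz'
        exact Set.disjoint_left.mp (hPd (m t) (m t') hmm)
          (hsub (m t) z hz1) (hsub (m t') z hz2)
      · intro t k hka hkb
        refine Set.disjoint_left.mpr fun z hz hzk => ?_
        have hz1 : z ∈ (s (m t)).support := hz
        by_cases hzx : z = x (m t)
        · subst hzx
          exact Set.disjoint_left.mp (hR.2 k a₀ hka) hzk (hxa t)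
        · by_cases hzy : z = y (m t)
          · subst hzy
            exact Set.disjoint_left.mp (hR.2 k b₀ hkb) hzk (hyb t)
          · exact hoff (m t) z hz1 hzx hzy k hzk
    have hadj : (rayGraph Γ R).Adj a₀ b₀ := ⟨hne, Or.inl hlink⟩
    obtain ⟨w0, hw0⟩ := ha₀C
    refine hb₀C ⟨w0.concat hadj, fun z hz => ?_⟩
    rw [Walk.support_concat, List.mem_append] at hz
    rcases hz with hz | hz
    · exact hw0 z hz
    · have hz' : z = b₀ := by simpa using hz
      subst hz'
      simpa using hb₀j
  · -- Separates → ¬ Reach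
    intro hsep hreach
    obtain ⟨w, hw⟩ := hreach
    have hequiv : RayEquivAvoiding Γ (R j).verts (R i₁) (R i₂) :=
      chain_equiv hR.2 w (fun x hx => by simpa using hw x hx)
    exact hsep (R i₁) (R i₂) (Ray.isTailOf_self _) (Ray.isTailOf_self _)
      (hR.2 i₁ j h1j) (hR.2 i₂ j h2j) hequiv

end Ubiquity
end
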